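/- arXiv:1002.1599 — 16 statements merged into one kernel-verified Lean document; each statement's English description precedes it below -/
import Mathlib

section
/- Every compact Hausdorff left topological left semiring has a common idempotent, i.e., there exists an element a with a + a = a and a · a = a. -/
/-- Ellis' lemma for a left topological semigroup given by an explicit operation. -/
lemma ellis_aux {X : Type*} [TopologicalSpace X] [T2Space X] (q : X → X → X)
    (hassoc : ∀ x y z : X, q (q x y) z = q x (q y z)) (hc : ∀ a : X, Continuous fun x => q a x)
    (s : Set X) (hne : s.Nonempty) (hcomp : IsCompact s)
    (hcl : ∀ x ∈ s, ∀ y ∈ s, q x y ∈ s) : ∃ a ∈ s, q a a = a := by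
  let M := { x // x ∈ s }
  letI : Semigroup M :=
    { mul := fun a b => ⟨q b.1 a.1, hcl _ b.2 _ a.2⟩
      mul_assoc := fun a b c => Subtype.ext (hassoc c.1 b.1 a.1).symm }
  haveI : CompactSpace M := isCompact_iff_compactSpace.mp hcomp
  haveI : Nonempty M := nonempty_subtype.mpr hne
  have hcont : ∀ r : M, Continuous (· * r) := fun r =>
    ((hc r.1).comp continuous_subtype_val).subtype_mk _
  obtain ⟨⟨a, ha⟩, idem⟩ := exists_idempotent_of_compact_t2_of_continuous_mul_left hcont
  exact ⟨a, ha, congrArg Subtype.val idem⟩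

/-- Every compact Hausdorff left topological left semiring has a common idempotent. -/
theorem stmt_0 {X : Type*} [TopologicalSpace X] [CompactSpace X] [T2Space X] [Nonempty X]
    (p m : X → X → X)
    (hp_assoc : ∀ x y z : X, p (p x y) z = p x (p y z))
    (hm_assoc : ∀ x y z : X, m (m x y) z = m x (m y z))
    (hld : ∀ x y z : X, m x (p y z) = p (m x y) (m x z))
    (hpc : ∀ a : X, Continuous fun x => p a x)
    (hmc : ∀ a : X, Continuous fun x => m a x) :
    ∃ a : X, p a a = a ∧ m a a = a := by
  -- the collection of nonempty closed subsemirings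
  set S : Set (Set X) := {Y | Y.Nonempty ∧ IsClosed Y ∧
      (∀ x ∈ Y, ∀ y ∈ Y, p x y ∈ Y) ∧ (∀ x ∈ Y, ∀ y ∈ Y, m x y ∈ Y)} with hS
  have huniv : (Set.univ : Set X) ∈ S :=
    ⟨Set.univ_nonempty, isClosed_univ, fun _ _ _ _ => trivial, fun _ _ _ _ => trivial⟩
  -- Zorn: a minimal element of S
  obtain ⟨Y, -, hYS, hYmin⟩ := zorn_superset_nonempty S (fun c hcS hchain hcne => by
    refine ⟨⋂₀ c, ⟨?_, ?_, ?_, ?_⟩, fun s hs => Set.sInter_subset_of_mem hs⟩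
    · haveI : Nonempty c := hcne.coe_sort
      exact IsCompact.nonempty_sInter_of_directed_nonempty_isCompact_isClosed
        (IsChain.directedOn hchain.symm)
        (fun U hU => (hcS hU).1) (fun U hU => (hcS hU).2.1.isCompact)
        (fun U hU => (hcS hU).2.1)
    · exact isClosed_sInter fun U hU => (hcS hU).2.1
    · intro x hx y hy
      rw [Set.mem_sInter] at *
      exact fun U hU => (hcS hU).2.2.1 x (hx U hU) y (hy U hU)
    · intro x hx y hy
      rw [Set.mem_sInter] at *
      exact fun U hU => (hcS hU).2.2.2 x (hx U hU) y (hy U hU))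
    Set.univ huniv
  obtain ⟨hYne, hYcl, hYp, hYm⟩ := hYS
  have hYcomp : IsCompact Y := hYcl.isCompact
  -- additive idempotent in Y
  obtain ⟨a, haY, hpaa⟩ := ellis_aux p hp_assoc hpc Y hYne hYcomp hYp
  -- m a '' Y is a nonempty closed subsemiring contained in Y
  have hZS : (m a '' Y) ∈ S := by
    refine ⟨hYne.image _, (hYcomp.image (hmc a)).isClosed, ?_, ?_⟩
    · rintro x ⟨y, hy, rfl⟩ x' ⟨z, hz, rfl⟩
      exact ⟨p y z, hYp y hy z hz, hld a y z⟩
    · rintro x ⟨y, hy, rfl⟩ x' ⟨z, hz, rfl⟩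
      exact ⟨m y (m a z), hYm y hy _ (hYm a haY z hz), (hm_assoc a y (m a z)).symm⟩
  have hZsub : m a '' Y ⊆ Y := by
    rintro x ⟨y, hy, rfl⟩; exact hYm a haY y hy
  have hYZ : Y ⊆ m a '' Y := hYmin hZS hZsub
  obtain ⟨b, hbY, hab⟩ := hYZ haY
  -- W = {y ∈ Y | m a y = a} is a nonempty closed subsemiring contained in Y
  have hWS : (Y ∩ (m a) ⁻¹' {a}) ∈ S := by
    refine ⟨⟨b, hbY, hab⟩, hYcl.inter (isClosed_singleton.preimage (hmc a)), ?_, ?_⟩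
    · rintro x ⟨hxY, hx⟩ y ⟨hyY, hy⟩
      refine ⟨hYp x hxY y hyY, ?_⟩
      simp only [Set.mem_preimage, Set.mem_singleton_iff] at *
      rw [hld, hx, hy, hpaa]
    · rintro x ⟨hxY, hx⟩ y ⟨hyY, hy⟩
      refine ⟨hYm x hxY y hyY, ?_⟩
      simp only [Set.mem_preimage, Set.mem_singleton_iff] at *
      rw [← hm_assoc, hx, hy]
  have hYW : Y ⊆ Y ∩ (m a) ⁻¹' {a} := hYmin hWS Set.inter_subset_left
  have hmaa : m a a = a := (hYW haY).2
  exact ⟨a, hpaa, hmaa⟩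
end

section
/- Every minimal compact Hausdorff left topological left semiring consists of a unique element: if X is a nonempty compact Hausdorff left topological left semiring such that every nonempty compact subset of X closed under both + and · equals X, then X is a singleton. -/
/-- Every minimal compact Hausdorff left topological left semiring is a singleton. -/
theorem stmt_1 {X : Type*} [TopologicalSpace X] [CompactSpace X] [T2Space X] [Nonempty X]
    (p m : X → X → X)
    (hp_assoc : ∀ x y z : X, p (p x y) z = p x (p y z))
    (hm_assoc : ∀ x y z : X, m (m x y) z = m x (m y z))
    (hld : ∀ x y z : X, m x (p y z) = p (m x y) (m x z))
    (hpc : ∀ a : X, Continuous fun x => p a x)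
    (hmc : ∀ a : X, Continuous fun x => m a x)
    (hmin : ∀ A : Set X, A.Nonempty → IsCompact A →
      (∀ x ∈ A, ∀ y ∈ A, p x y ∈ A) → (∀ x ∈ A, ∀ y ∈ A, m x y ∈ A) → A = Set.univ) :
    ∃ a : X, ∀ x : X, x = a := by
  -- Step 1: Ellis' lemma gives an additive idempotent `e`.
  obtain ⟨e, he⟩ : ∃ e : X, p e e = e := by
    letI : Mul X := ⟨fun a b => p b a⟩
    letI : Semigroup X := ⟨fun a b c => (hp_assoc c b a).symm⟩
    exact exists_idempotent_of_compact_t2_of_continuous_mul_left fun r => hpc r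
  -- Step 2: `e·X` is a nonempty compact subsemiring, hence all of `X`.
  have h2 : (Set.range fun x => m e x) = Set.univ := by
    apply hmin
    · exact Set.range_nonempty _
    · exact isCompact_range (hmc e)
    · rintro _ ⟨x, rfl⟩ _ ⟨y, rfl⟩
      exact ⟨p x y, by simpa using hld e x y⟩
    · rintro _ ⟨x, rfl⟩ _ ⟨y, rfl⟩
      exact ⟨m x (m e y), (hm_assoc e x (m e y)).symm⟩
  -- In particular `e` is in the range, i.e. `{x | e·x = e}` is nonempty.
  have h3 : ∃ x, m e x = e := by
    have : e ∈ Set.range fun x => m e x := h2 ▸ Set.mem_univ e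
    exact this
  -- Step 3: `Z = {x | e·x = e}` is a closed subsemiring, hence all of `X`.
  have h4 : {x : X | m e x = e} = Set.univ := by
    apply hmin
    · exact h3
    · exact ((isClosed_singleton.preimage (hmc e))).isCompact
    · intro x hx y hy
      show m e (p x y) = e
      rw [hld, hx, hy, he]
    · intro x hx y hy
      show m e (m x y) = e
      rw [← hm_assoc, hx, hy]
  have hee : m e e = e := by
    have : e ∈ {x : X | m e x = e} := h4 ▸ Set.mem_univ e
    exact this
  -- Step 4: `{e}` is a subsemiring, hence `X = {e}`.
  have h5 : ({e} : Set X) = Set.univ := by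
    apply hmin
    · exact ⟨e, rfl⟩
    · exact isCompact_singleton
    · rintro x rfl y rfl; simpa using he
    · rintro x rfl y rfl; simpa using hee
  exact ⟨e, fun x => by have : x ∈ ({e} : Set X) := h5 ▸ Set.mem_univ x; simpa using this⟩
end

section
/- In every minimal compact Hausdorff left topological left semiring, any additive idempotent is also a multiplicative idempotent: if X is a nonempty compact Hausdorff left topological left semiring in which every nonempty compact subset closed under both operations equals X, and a ∈ X satisfies a + a = a, then a · a = a. -/
/-- In a minimal compact Hausdorff left topological left semiring, any additive idempotent
is also a multiplicative idempotent. -/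
theorem stmt_2 {X : Type*} [TopologicalSpace X] [CompactSpace X] [T2Space X] [Nonempty X]
    (p m : X → X → X)
    (hp_assoc : ∀ x y z : X, p (p x y) z = p x (p y z))
    (hm_assoc : ∀ x y z : X, m (m x y) z = m x (m y z))
    (hld : ∀ x y z : X, m x (p y z) = p (m x y) (m x z))
    (hpc : ∀ a : X, Continuous fun x => p a x)
    (hmc : ∀ a : X, Continuous fun x => m a x)
    (hmin : ∀ A : Set X, A.Nonempty → IsCompact A →
      (∀ x ∈ A, ∀ y ∈ A, p x y ∈ A) → (∀ x ∈ A, ∀ y ∈ A, m x y ∈ A) → A = Set.univ)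
    (a : X) (ha : p a a = a) :
    m a a = a := by
  have hrange : Set.range (m a) = Set.univ := by
    apply hmin
    · exact ⟨m a a, a, rfl⟩
    · exact isCompact_range (hmc a)
    · rintro x ⟨u, rfl⟩ y ⟨v, rfl⟩
      exact ⟨p u v, (hld a u v)⟩
    · rintro x ⟨u, rfl⟩ y ⟨v, rfl⟩
      exact ⟨m u (m a v), (hm_assoc a u (m a v)).symm⟩
  obtain ⟨x, hx⟩ : a ∈ Set.range (m a) := hrange ▸ Set.mem_univ a
  have hB : (m a) ⁻¹' {a} = Set.univ := by
    apply hmin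
    · exact ⟨x, hx⟩
    · exact (isClosed_singleton.preimage (hmc a)).isCompact
    · intro y hy z hz
      simp only [Set.mem_preimage, Set.mem_singleton_iff] at *
      rw [hld, hy, hz, ha]
    · intro y hy z hz
      simp only [Set.mem_preimage, Set.mem_singleton_iff] at *
      rw [← hm_assoc, hy, hz]
  have : a ∈ (m a) ⁻¹' {a} := hB ▸ Set.mem_univ a
  simpa using this
end

section
/- In a minimal compact Hausdorff left topological left semiring X, for every element a the set a·X = {a·x : x ∈ X} equals all of X. -/
/-- In a minimal compact Hausdorff left topological left semiring, a·X = X for every a. -/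
theorem stmt_3 {X : Type*} [TopologicalSpace X] [CompactSpace X] [T2Space X] [Nonempty X]
    (p m : X → X → X)
    (hp_assoc : ∀ x y z : X, p (p x y) z = p x (p y z))
    (hm_assoc : ∀ x y z : X, m (m x y) z = m x (m y z))
    (hld : ∀ x y z : X, m x (p y z) = p (m x y) (m x z))
    (hpc : ∀ a : X, Continuous fun x => p a x)
    (hmc : ∀ a : X, Continuous fun x => m a x)
    (hmin : ∀ A : Set X, A.Nonempty → IsCompact A →
      (∀ x ∈ A, ∀ y ∈ A, p x y ∈ A) → (∀ x ∈ A, ∀ y ∈ A, m x y ∈ A) → A = Set.univ)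
    (a : X) :
    Set.range (fun x => m a x) = Set.univ := by
  apply hmin
  · exact Set.range_nonempty _
  · exact isCompact_range (hmc a)
  · rintro _ ⟨x, rfl⟩ _ ⟨y, rfl⟩
    exact ⟨p x y, by simp [hld]⟩
  · rintro _ ⟨x, rfl⟩ _ ⟨y, rfl⟩
    exact ⟨m x (m a y), by simp [hm_assoc]⟩
end

section
/- Any minimal finite left semiring consists of a unique element: if X is a nonempty finite left semiring such that every nonempty subset of X closed under both + and · equals X, then X is a singleton. -/
/-- In a finite type with an associative operation, every element has an
idempotent "power"; moreover this power lies in any set containing the element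
and closed under the operation. -/
lemma exists_idempotent_rec {α : Type*} [Finite α] (op : α → α → α)
    (hassoc : ∀ x y z, op (op x y) z = op x (op y z)) (a : α)
    (Q : α → Prop) (hQa : Q a) (hQop : ∀ x y, Q x → Q y → Q (op x y)) :
    ∃ e, op e e = e ∧ Q e := by
  set s : ℕ → α := fun n => (fun y => op a y)^[n] a with hs
  have hs0 : s 0 = a := rfl
  have hsucc : ∀ n, s (n + 1) = op a (s n) := by
    intro n; simp [hs, Function.iterate_succ_apply']
  have hQ : ∀ n, Q (s n) := by
    intro n; induction n with
    | zero => exact hQa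
    | succ k ih => rw [hsucc]; exact hQop _ _ hQa ih
  have L : ∀ i j, s (i + j + 1) = op (s i) (s j) := by
    intro i j
    induction i with
    | zero => simp [hs0, hsucc]
    | succ k ih =>
      have h1 : k + 1 + j + 1 = (k + j + 1) + 1 := by omega
      rw [h1, hsucc, ih, hsucc, hassoc]
  obtain ⟨i0, j0, hne, heq⟩ := Finite.exists_ne_map_eq_of_infinite s
  obtain ⟨i, t, ht, hit⟩ : ∃ i t, 1 ≤ t ∧ s (i + t) = s i := by
    rcases lt_or_gt_of_ne hne with h | h
    · exact ⟨i0, j0 - i0, by omega,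
        by rw [show i0 + (j0 - i0) = j0 by omega]; exact heq.symm⟩
    · exact ⟨j0, i0 - j0, by omega,
        by rw [show j0 + (i0 - j0) = i0 by omega]; exact heq⟩
  have step : ∀ n, i ≤ n → s (n + t) = s n := by
    intro n hn
    obtain ⟨r, rfl⟩ : ∃ r, n = i + r := ⟨n - i, by omega⟩
    cases r with
    | zero => simpa using hit
    | succ r' =>
      have h1 : i + (r' + 1) + t = (i + t) + r' + 1 := by omega
      have h2 : i + (r' + 1) = i + r' + 1 := by omega
      rw [h1, L, hit, h2, ← L]
  have mult : ∀ k n, i ≤ n → s (n + k * t) = s n := by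
    intro k
    induction k with
    | zero => simp
    | succ k ih =>
      intro n hn
      have h1 : n + (k + 1) * t = (n + k * t) + t := by ring
      rw [h1, step _ (by omega), ih n hn]
  have hpos : 1 ≤ (i + 1) * t := by
    calc 1 = 1 * 1 := by ring
    _ ≤ (i + 1) * t := Nat.mul_le_mul (by omega) ht
  refine ⟨s ((i + 1) * t - 1), ?_, hQ _⟩
  set M := (i + 1) * t - 1 with hM
  have hM1 : M + 1 = (i + 1) * t := by omega
  have hMi : i ≤ M := by
    have h2 : i + 1 ≤ (i + 1) * t := Nat.le_mul_of_pos_right _ (by omega)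
    omega
  have hmm := mult (i + 1) M hMi
  rw [← L, show M + M + 1 = M + (i + 1) * t by omega]
  exact hmm

/-- Any minimal finite left semiring consists of a unique element. -/
theorem stmt_4 {X : Type*} [Finite X] [Nonempty X]
    (p m : X → X → X)
    (hp_assoc : ∀ x y z : X, p (p x y) z = p x (p y z))
    (hm_assoc : ∀ x y z : X, m (m x y) z = m x (m y z))
    (hld : ∀ x y z : X, m x (p y z) = p (m x y) (m x z))
    (hmin : ∀ A : Set X, A.Nonempty →
      (∀ x ∈ A, ∀ y ∈ A, p x y ∈ A) → (∀ x ∈ A, ∀ y ∈ A, m x y ∈ A) → A = Set.univ) :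
    ∃ a : X, ∀ x : X, x = a := by
  classical
  obtain ⟨a⟩ := ‹Nonempty X›
  -- additive idempotent u
  obtain ⟨u, hu, -⟩ := exists_idempotent_rec p hp_assoc a (fun _ => True) trivial
    (fun _ _ _ _ => trivial)
  -- left multiplication by u is surjective by minimality
  have hsurj : Function.Surjective (fun x => m u x) := by
    have hA := hmin (Set.range (fun x => m u x)) ⟨m u u, ⟨u, rfl⟩⟩
      (by rintro x ⟨x', rfl⟩ y ⟨y', rfl⟩; exact ⟨p x' y', by simpa using hld u x' y'⟩)
      (by rintro x ⟨x', rfl⟩ y ⟨y', rfl⟩; exact ⟨m x' (m u y'), by simpa using (hm_assoc u x' (m u y')).symm⟩)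
    intro y
    have : y ∈ Set.range (fun x => m u x) := hA ▸ Set.mem_univ y
    exact this
  have hinj : Function.Injective (fun x => m u x) :=
    (Finite.injective_iff_surjective).mpr hsurj
  -- an idempotent power of λ_u in (X → X, ∘)
  obtain ⟨F, hFF, hFQ⟩ := exists_idempotent_rec (α := X → X) (fun f g => f ∘ g)
    (fun _ _ _ => rfl) (fun x => m u x)
    (fun f => Function.Injective f ∧ ∃ n, 1 ≤ n ∧ f = (fun x => m u x)^[n])
    ⟨hinj, 1, le_refl 1, by simp⟩
    (fun f g hf hg => by
      obtain ⟨hfi, nf, hnf, rfl⟩ := hf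
      obtain ⟨hgi, ng, hng, rfl⟩ := hg
      exact ⟨hfi.comp hgi, nf + ng, by omega, by exact (Function.iterate_add _ nf ng).symm⟩)
  obtain ⟨hFinj, n, hn1, rfl⟩ := hFQ
  have hFid : ∀ x, (fun x => m u x)^[n] x = x := by
    intro x
    apply hFinj
    have h := congrFun hFF x
    simpa using h
  -- m-powers of u
  set w : ℕ → X := fun k => (fun y => m u y)^[k] u with hw
  have hw0 : w 0 = u := rfl
  have hwsucc : ∀ k, w (k + 1) = m u (w k) := by
    intro k; simp [hw, Function.iterate_succ_apply']
  have hlam : ∀ k x, m (w k) x = (fun y => m u y)^[k + 1] x := by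
    intro k
    induction k with
    | zero => intro x; simp [hw0]
    | succ j ih =>
      intro x
      rw [hwsucc, hm_assoc, ih]
      rw [Function.iterate_succ_apply' (fun y => m u y) (j + 1) x]
  have hB : ∀ k, w (k + 1) = m (w k) u := by
    intro k
    induction k with
    | zero => rw [hwsucc, hw0]
    | succ j ih =>
      calc w (j + 1 + 1) = m u (w (j + 1)) := hwsucc (j + 1)
        _ = m u (m (w j) u) := by rw [ih]
        _ = m (m u (w j)) u := (hm_assoc u (w j) u).symm
        _ = m (w (j + 1)) u := by rw [← hwsucc j]
  obtain ⟨k, rfl⟩ : ∃ k, n = k + 1 := ⟨n - 1, by omega⟩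
  set v := w k with hv
  have hmvv : m v v = v := by rw [hlam k v]; exact hFid v
  have hpvv : p v v = v := by
    rcases k with _ | j
    · simpa [hv, hw0] using hu
    · rw [hv, hB j, ← hld, hu]
  have hsingle := hmin {v} ⟨v, rfl⟩
    (by
      intro x hx y hy
      rw [Set.mem_singleton_iff] at hx hy
      subst hx; subst hy
      rw [Set.mem_singleton_iff, hpvv])
    (by
      intro x hx y hy
      rw [Set.mem_singleton_iff] at hx hy
      subst hx; subst hy
      rw [Set.mem_singleton_iff, hmvv])
  refine ⟨v, fun x => ?_⟩
  have hx : x ∈ ({v} : Set X) := hsingle ▸ Set.mem_univ x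
  simpa using hx
end

section
/- Any minimal semiring consists of a unique element: if X is a nonempty set with two associative binary operations + and · satisfying both distributive laws x·(y+z) = x·y + x·z and (x+y)·z = x·z + y·z, and every nonempty subset of X closed under both + and · equals X, then X is a singleton. -/
/-- Any minimal semiring (two-sided distributivity) consists of a unique element. -/
theorem stmt_5 {X : Type*} [Nonempty X]
    (p m : X → X → X)
    (hp_assoc : ∀ x y z : X, p (p x y) z = p x (p y z))
    (hm_assoc : ∀ x y z : X, m (m x y) z = m x (m y z))
    (hld : ∀ x y z : X, m x (p y z) = p (m x y) (m x z))
    (hrd : ∀ x y z : X, m (p x y) z = p (m x z) (m y z))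
    (hmin : ∀ A : Set X, A.Nonempty →
      (∀ x ∈ A, ∀ y ∈ A, p x y ∈ A) → (∀ x ∈ A, ∀ y ∈ A, m x y ∈ A) → A = Set.univ) :
    ∃ a : X, ∀ x : X, x = a := by
  obtain ⟨a⟩ := ‹Nonempty X›
  -- Step 1: for every b, b·X = X
  have haX : ∀ b z : X, ∃ y, m b y = z := by
    intro b z
    have h := hmin (Set.range (m b)) ⟨m b b, b, rfl⟩ ?_ ?_
    · have hz : z ∈ Set.range (m b) := h.symm ▸ Set.mem_univ z
      exact hz
    · rintro _ ⟨y, rfl⟩ _ ⟨y', rfl⟩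
      exact ⟨p y y', hld b y y'⟩
    · rintro _ ⟨y, rfl⟩ _ ⟨y', rfl⟩
      exact ⟨m y (m b y'), (hm_assoc b y (m b y')).symm⟩
  -- and X·b = X
  have hXa : ∀ b z : X, ∃ y, m y b = z := by
    intro b z
    have h := hmin (Set.range (fun y => m y b)) ⟨m b b, b, rfl⟩ ?_ ?_
    · have hz : z ∈ Set.range (fun y => m y b) := h.symm ▸ Set.mem_univ z
      exact hz
    · rintro _ ⟨y, rfl⟩ _ ⟨y', rfl⟩
      exact ⟨p y y', hrd y y' b⟩
    · rintro _ ⟨y, rfl⟩ _ ⟨y', rfl⟩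
      exact ⟨m (m y b) y', hm_assoc (m y b) y' b⟩
  -- Step 2: two-sided multiplicative identity
  obtain ⟨e, he⟩ := haX a a
  have hre : ∀ b, m b e = b := by
    intro b
    obtain ⟨y, hy⟩ := hXa a b
    rw [← hy, hm_assoc, he]
  obtain ⟨e', he'⟩ := hXa a a
  have hle0 : ∀ b, m e' b = b := by
    intro b
    obtain ⟨y, hy⟩ := haX a b
    rw [← hy, ← hm_assoc, he']
  have hee : e' = e := (hre e').symm.trans (hle0 e)
  have hle : ∀ b, m e b = b := hee ▸ hle0
  -- Step 3: some c with c + e = e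
  have hc : ∃ c, p c e = e := by
    have h := hmin (Set.range (fun y => p y e)) ⟨p e e, e, rfl⟩ ?_ ?_
    · have hz : e ∈ Set.range (fun y => p y e) := h.symm ▸ Set.mem_univ e
      exact hz
    · rintro _ ⟨y, rfl⟩ _ ⟨z, rfl⟩
      exact ⟨p (p y e) z, hp_assoc (p y e) z e⟩
    · rintro _ ⟨y, rfl⟩ _ ⟨z, rfl⟩
      refine ⟨p (m (p y e) z) y, ?_⟩
      show p (p (m (p y e) z) y) e = m (p y e) (p z e)
      rw [hld, hre, hp_assoc]
  obtain ⟨c, hc⟩ := hc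
  -- Step 4: the set {x | x + e = e} is closed under both operations, hence is everything
  have hC := hmin {x | p x e = e} ⟨c, hc⟩ ?_ ?_
  · -- in particular e + e = e
    have hpe : p e e = e := by
      have : e ∈ {x : X | p x e = e} := hC ▸ Set.mem_univ e
      exact this
    -- Step 5: {e} is closed under both operations, so everything equals e
    refine ⟨e, fun x => ?_⟩
    have hfin := hmin {e} ⟨e, rfl⟩ ?_ ?_
    · have : x ∈ ({e} : Set X) := hfin ▸ Set.mem_univ x
      exact this
    · intro u hu v hv
      rw [Set.mem_singleton_iff] at hu hv ⊢
      rw [hu, hv, hpe]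
    · intro u hu v hv
      rw [Set.mem_singleton_iff] at hu hv ⊢
      rw [hu, hv, hle]
  · intro x hx y hy
    show p (p x y) e = e
    rw [hp_assoc, hy, hx]
  · intro x hx y hy
    show p (m x y) e = e
    have h1 : p (m x y) y = y := by
      have h2 := hrd x e y
      rw [hx, hle] at h2
      exact h2.symm
    calc p (m x y) e = p (m x y) (p y e) := by rw [hy]
      _ = p (p (m x y) y) e := (hp_assoc _ _ _).symm
      _ = p y e := by rw [h1]
      _ = e := hy
end

section
/- Any minimal compact Hausdorff left topological semigroup consists of a unique element: if X is a nonempty compact Hausdorff space with an associative binary operation · such that for each a ∈ X the map x ↦ a·x is continuous, and every nonempty compact subset of X closed under · equals X, then X is a singleton. -/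
/-- Any minimal compact Hausdorff left topological semigroup consists of a unique element. -/
theorem stmt_7 {X : Type*} [TopologicalSpace X] [CompactSpace X] [T2Space X] [Nonempty X]
    (m : X → X → X)
    (hm_assoc : ∀ x y z : X, m (m x y) z = m x (m y z))
    (hmc : ∀ a : X, Continuous fun x => m a x)
    (hmin : ∀ A : Set X, A.Nonempty → IsCompact A →
      (∀ x ∈ A, ∀ y ∈ A, m x y ∈ A) → A = Set.univ) :
    ∃ a : X, ∀ x : X, x = a := by
  have key : ∀ a x : X, m a x = a := by
    intro a
    -- the range of (m a ·) is all of X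
    have hrange : Set.range (m a) = Set.univ := by
      apply hmin _ (Set.range_nonempty _) (isCompact_range (hmc a))
      rintro _ ⟨x, rfl⟩ _ ⟨y, rfl⟩
      exact ⟨m x (m a y), (hm_assoc a x (m a y)).symm⟩
    have hex : ∃ x, m a x = a := by
      have : a ∈ Set.range (m a) := hrange ▸ Set.mem_univ a
      exact this
    -- the fixed-point set {x | m a x = a} is all of X
    have hS : {x : X | m a x = a} = Set.univ := by
      apply hmin _ hex
      · exact (isClosed_singleton.preimage (hmc a)).isCompact
      · intro x hx y hy
        show m a (m x y) = a
        rw [← hm_assoc, hx, hy]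
    intro x
    exact (hS ▸ Set.mem_univ x : x ∈ {x : X | m a x = a})
  obtain ⟨a⟩ := ‹Nonempty X›
  have : ({a} : Set X) = Set.univ :=
    hmin ({a} : Set X) ⟨a, rfl⟩ isCompact_singleton (by
      intro x hx y hy
      simp only [Set.mem_singleton_iff] at hx hy ⊢
      rw [hx, hy, key])
  exact ⟨a, fun x => (this ▸ Set.mem_univ x : x ∈ ({a} : Set X))⟩
end

section
/- (van Douwen) The set {u ∈ ℕ* : for all v, w ∈ ℕ*, u·(v+w) = u·v + u·w} is nowhere dense in ℕ*. -/
attribute [local instance] Ultrafilter.mul Ultrafilter.add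

open Filter Set

namespace VanDouwenAux

variable {e : ℕ → ℕ}

lemma e_mono (h2 : ∀ n, 2 ≤ e n) (hg : ∀ n, 4 * e n * e n < e (n + 1)) : StrictMono e :=
  strictMono_nat_of_lt_succ fun n => by nlinarith [h2 n, hg n]

lemma e_gap (h2 : ∀ n, 2 ≤ e n) (hg : ∀ n, 4 * e n * e n < e (n + 1)) {m n : ℕ}
    (h : m < n) : 4 * e m * e m < e n := by
  induction n with
  | zero => omega
  | succ n ih =>
    rcases Nat.lt_succ_iff_lt_or_eq.mp h with h' | h'
    · exact lt_trans (ih h') (e_mono h2 hg (Nat.lt_succ_self n))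
    · subst h'; exact hg m

lemma pin (h2 : ∀ n, 2 ≤ e n) (hg : ∀ n, 4 * e n * e n < e (n + 1)) {x m m' : ℕ}
    (hm : e m < x) (hm1 : x < e (m + 1)) (hm' : e m' < x) (hm1' : x < e (m' + 1)) : m = m' := by
  rcases lt_trichotomy m m' with h | h | h
  · have : e (m + 1) ≤ e m' := (e_mono h2 hg).monotone (by omega)
    omega
  · exact h
  · have : e (m' + 1) ≤ e m := (e_mono h2 hg).monotone (by omega)
    omega

lemma prod_lb (h2 : ∀ n, 2 ≤ e n) (p q : ℕ) : e (max p q) < e p * e q := by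
  rcases le_total p q with h | h
  · rw [max_eq_right h]; nlinarith [h2 p, h2 q]
  · rw [max_eq_left h]; nlinarith [h2 p, h2 q]

lemma prod_ub (h2 : ∀ n, 2 ≤ e n) (hg : ∀ n, 4 * e n * e n < e (n + 1)) (p q : ℕ) :
    e p * e q < e (max p q + 1) := by
  have hp : e p ≤ e (max p q) := (e_mono h2 hg).monotone (le_max_left p q)
  have hq : e q ≤ e (max p q) := (e_mono h2 hg).monotone (le_max_right p q)
  nlinarith [hg (max p q)]

lemma sum_lb (h2 : ∀ n, 2 ≤ e n) (hg : ∀ n, 4 * e n * e n < e (n + 1)) (p q r s : ℕ) :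
    e (max (max p q) (max r s)) < e p * e q + e r * e s := by
  rcases le_total (max p q) (max r s) with h | h
  · rw [max_eq_right h]
    have := prod_lb h2 r s
    omega
  · rw [max_eq_left h]
    have := prod_lb h2 p q
    omega

lemma sum_ub (h2 : ∀ n, 2 ≤ e n) (hg : ∀ n, 4 * e n * e n < e (n + 1)) (p q r s : ℕ) :
    e p * e q + e r * e s < e (max (max p q) (max r s) + 1) := by
  set M := max (max p q) (max r s) with hM
  have hp : e p ≤ e M := (e_mono h2 hg).monotone (by omega)
  have hq : e q ≤ e M := (e_mono h2 hg).monotone (by omega)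
  have hr : e r ≤ e M := (e_mono h2 hg).monotone (by omega)
  have hs : e s ≤ e M := (e_mono h2 hg).monotone (by omega)
  nlinarith [hg M]

lemma prod_eq (h2 : ∀ n, 2 ≤ e n) (hg : ∀ n, 4 * e n * e n < e (n + 1)) {i j k l : ℕ}
    (h : e (2 * i) * e (2 * j + 1) = e (2 * k) * e (2 * l + 1)) : i = k := by
  have hpin : max (2 * i) (2 * j + 1) = max (2 * k) (2 * l + 1) :=
    pin h2 hg (prod_lb h2 _ _) (prod_ub h2 hg _ _) (h ▸ prod_lb h2 _ _) (h ▸ prod_ub h2 hg _ _)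
  rcases Nat.even_or_odd (max (2 * i) (2 * j + 1)) with ⟨t, ht⟩ | ⟨t, ht⟩
  · omega
  · have hjl : 2 * j + 1 = 2 * l + 1 := by omega
    rw [hjl] at h
    have := Nat.eq_of_mul_eq_mul_right (by have := h2 (2 * l + 1); omega) h
    have := (e_mono h2 hg).injective this
    omega

lemma sum_eq_aux (h2 : ∀ n, 2 ≤ e n) (hg : ∀ n, 4 * e n * e n < e (n + 1)) {i k m : ℕ}
    (hlt : e (2 * i) < e (2 * k)) (h : e (2 * i) + e (2 * k) = 2 * e (2 * m)) : False := by
  have h3 : e (2 * m) < e (2 * k) := by omega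
  have h4 : 2 * m < 2 * k := (e_mono h2 hg).lt_iff_lt.mp h3
  have h5 := e_gap h2 hg h4
  nlinarith [h2 (2 * m)]

lemma sum_eq (h2 : ∀ n, 2 ≤ e n) (hg : ∀ n, 4 * e n * e n < e (n + 1)) {i k m : ℕ}
    (h : e (2 * i) + e (2 * k) = 2 * e (2 * m)) : i = k := by
  rcases lt_trichotomy (e (2 * i)) (e (2 * k)) with hlt | heq | hgt
  · exact absurd h (fun h => sum_eq_aux h2 hg hlt h)
  · have := (e_mono h2 hg).injective heq; omega
  · exact absurd (by omega : e (2 * k) + e (2 * i) = 2 * e (2 * m))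
      (fun h => sum_eq_aux h2 hg hgt h)

lemma decomp {E α β α' β' : ℕ} (hβ : β < E) (hβ' : β' < E)
    (h : α * E + β = α' * E + β') : α = α' ∧ β = β' := by
  have hα : α = α' := by
    rcases lt_trichotomy α α' with hh | hh | hh
    · nlinarith
    · exact hh
    · nlinarith
  subst hα
  omega

lemma small (h2 : ∀ n, 2 ≤ e n) (hg : ∀ n, 4 * e n * e n < e (n + 1)) {p q M : ℕ}
    (hp : p < M) (hq : q < M) : e p * e q < e M := by
  have h1 : e p ≤ e (M - 1) := (e_mono h2 hg).monotone (by omega)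
  have h1' : e q ≤ e (M - 1) := (e_mono h2 hg).monotone (by omega)
  have h3 : 4 * e (M - 1) * e (M - 1) < e M := e_gap h2 hg (by omega)
  nlinarith [h2 (M-1)]

lemma star (h2 : ∀ n, 2 ≤ e n) (hg : ∀ n, 4 * e n * e n < e (n + 1))
    (i j k l i' j' k' : ℕ) (hik : i ≠ k)
    (h : e (2 * i) * e (2 * j + 1) + e (2 * k) * e (2 * l + 1)
       = e (2 * i') * (e (2 * j' + 1) + e (2 * k' + 1))) : False := by
  rw [Nat.mul_add] at h
  set M := max (max (2 * i) (2 * j + 1)) (max (2 * k) (2 * l + 1)) with hMdef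
  have hMeq : M = max (max (2 * i') (2 * j' + 1)) (max (2 * i') (2 * k' + 1)) :=
    pin h2 hg (sum_lb h2 hg _ _ _ _) (sum_ub h2 hg _ _ _ _)
      (h ▸ sum_lb h2 hg _ _ _ _) (h ▸ sum_ub h2 hg _ _ _ _)
  rcases Nat.even_or_odd M with ⟨t, ht⟩ | ⟨t, ht⟩
  · -- M even : M = 2*i or 2*k on the left, M = 2*i' on the right
    have hi' : M = 2 * i' := by omega
    have : i' = i ∨ i' = k := by omega
    rcases this with rfl | rfl
    · have hkM : 2 * k < 2 * i' := by omega
      have heq2 : e (2 * j + 1) * e (2 * i') + e (2 * k) * e (2 * l + 1)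
          = (e (2 * j' + 1) + e (2 * k' + 1)) * e (2 * i') + 0 := by
        ring_nf at h ⊢
        linarith
      obtain ⟨-, hb0⟩ := decomp (small h2 hg hkM (by omega)) (by have := h2 (2 * i'); omega) heq2
      exact absurd hb0 (Nat.mul_ne_zero (by have := h2 (2 * k); omega)
        (by have := h2 (2 * l + 1); omega))
    · have hiM : 2 * i < 2 * i' := by omega
      have heq2 : e (2 * l + 1) * e (2 * i') + e (2 * i) * e (2 * j + 1)
          = (e (2 * j' + 1) + e (2 * k' + 1)) * e (2 * i') + 0 := by
        ring_nf at h ⊢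
        linarith
      obtain ⟨-, hb0⟩ := decomp (small h2 hg hiM (by omega)) (by have := h2 (2 * i'); omega) heq2
      exact absurd hb0 (Nat.mul_ne_zero (by have := h2 (2 * i); omega)
        (by have := h2 (2 * j + 1); omega))
  · -- M odd
    have hiM : 2 * i < M := by omega
    have hkM : 2 * k < M := by omega
    have hi'M : 2 * i' < M := by omega
    have horL : 2 * j + 1 = M ∨ 2 * l + 1 = M := by omega
    have horR : 2 * j' + 1 = M ∨ 2 * k' + 1 = M := by omega
    have hleft : ∃ α β, e (2 * i) * e (2 * j + 1) + e (2 * k) * e (2 * l + 1) = α * e M + β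
        ∧ β < e M ∧
        ((α = e (2 * i) + e (2 * k) ∧ β = 0) ∨
         (α = e (2 * i) ∧ ∃ l₀, β = e (2 * k) * e (2 * l₀ + 1)) ∨
         (α = e (2 * k) ∧ ∃ j₀, β = e (2 * i) * e (2 * j₀ + 1))) := by
      by_cases hbj : 2 * j + 1 = M
      · by_cases hbl : 2 * l + 1 = M
        · exact ⟨e (2 * i) + e (2 * k), 0, by rw [hbj, hbl]; ring,
            by have := h2 M; omega, Or.inl ⟨rfl, rfl⟩⟩
        · exact ⟨e (2 * i), e (2 * k) * e (2 * l + 1), by rw [hbj],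
            small h2 hg hkM (by omega), Or.inr (Or.inl ⟨rfl, l, rfl⟩)⟩
      · have hbl : 2 * l + 1 = M := by tauto
        exact ⟨e (2 * k), e (2 * i) * e (2 * j + 1), by rw [hbl]; ring,
          small h2 hg hiM (by omega), Or.inr (Or.inr ⟨rfl, j, rfl⟩)⟩
    have hright : ∃ α' β', e (2 * i') * e (2 * j' + 1) + e (2 * i') * e (2 * k' + 1)
        = α' * e M + β' ∧ β' < e M ∧
        ((α' = 2 * e (2 * i') ∧ β' = 0) ∨
         (α' = e (2 * i') ∧ ∃ m₀, β' = e (2 * i') * e (2 * m₀ + 1))) := by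
      by_cases hbj' : 2 * j' + 1 = M
      · by_cases hbk' : 2 * k' + 1 = M
        · exact ⟨2 * e (2 * i'), 0, by rw [hbj', hbk']; ring,
            by have := h2 M; omega, Or.inl ⟨rfl, rfl⟩⟩
        · exact ⟨e (2 * i'), e (2 * i') * e (2 * k' + 1), by rw [hbj'],
            small h2 hg hi'M (by omega), Or.inr ⟨rfl, k', rfl⟩⟩
      · have hbk' : 2 * k' + 1 = M := by tauto
        exact ⟨e (2 * i'), e (2 * i') * e (2 * j' + 1), by rw [hbk']; ring,
          small h2 hg hi'M (by omega), Or.inr ⟨rfl, j', rfl⟩⟩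
    obtain ⟨α, β, hL, hβ, hcase⟩ := hleft
    obtain ⟨α', β', hR, hβ', hcase'⟩ := hright
    obtain ⟨hαα, hββ⟩ := decomp hβ hβ' (by rw [← hL, ← hR]; exact h)
    clear hL hR hβ hβ' h hMeq hMdef
    rcases hcase with ⟨hα, hβ0⟩ | ⟨hα, l₀, hβv⟩ | ⟨hα, j₀, hβv⟩ <;>
      rcases hcase' with ⟨hα', hβ0'⟩ | ⟨hα', m₀, hβv'⟩
    · exact hik (sum_eq h2 hg (by rw [← hα, hαα, hα']))
    · have hb : e (2 * i') * e (2 * m₀ + 1) = 0 := by rw [← hβv', ← hββ, hβ0]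
      exact absurd hb (Nat.mul_ne_zero (by have := h2 (2 * i'); omega)
        (by have := h2 (2 * m₀ + 1); omega))
    · have hb : e (2 * k) * e (2 * l₀ + 1) = 0 := by rw [← hβv, hββ, hβ0']
      exact absurd hb (Nat.mul_ne_zero (by have := h2 (2 * k); omega)
        (by have := h2 (2 * l₀ + 1); omega))
    · have hii' : i = i' := by
        have h1 : e (2 * i) = e (2 * i') := by rw [← hα, hαα, hα']
        have h3 := (e_mono h2 hg).injective h1; omega
      subst hii'
      have hprod : e (2 * k) * e (2 * l₀ + 1) = e (2 * i) * e (2 * m₀ + 1) := by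
        rw [← hβv, hββ, hβv']
      exact hik (prod_eq h2 hg hprod).symm
    · have hb : e (2 * i) * e (2 * j₀ + 1) = 0 := by rw [← hβv, hββ, hβ0']
      exact absurd hb (Nat.mul_ne_zero (by have := h2 (2 * i); omega)
        (by have := h2 (2 * j₀ + 1); omega))
    · have hki' : k = i' := by
        have h1 : e (2 * k) = e (2 * i') := by rw [← hα, hαα, hα']
        have h3 := (e_mono h2 hg).injective h1; omega
      subst hki'
      have hprod : e (2 * i) * e (2 * j₀ + 1) = e (2 * k) * e (2 * m₀ + 1) := by
        rw [← hβv, hββ, hβv']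
      exact hik (prod_eq h2 hg hprod)

noncomputable def seqFn (f : ℕ → ℕ) : ℕ → ℕ
  | 0 => f 1
  | n + 1 => if Even (n + 1) then f (4 * seqFn f n * seqFn f n) else 4 * seqFn f n * seqFn f n + 1

lemma exists_seq {s : Set ℕ} (hs : s.Infinite) :
    ∃ e : ℕ → ℕ, (∀ n, 2 ≤ e n) ∧ (∀ n, 4 * e n * e n < e (n + 1)) ∧ (∀ k, e (2 * k) ∈ s) := by
  choose f hfs hfgt using fun m : ℕ => hs.exists_gt m
  refine ⟨seqFn f, ?_, ?_, ?_⟩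
  · intro n
    induction n with
    | zero => have := hfgt 1; simp only [seqFn]; omega
    | succ n ih =>
      rw [seqFn]
      split
      · have := hfgt (4 * seqFn f n * seqFn f n); nlinarith
      · nlinarith
  · intro n
    show 4 * seqFn f n * seqFn f n <
      (if Even (n + 1) then f (4 * seqFn f n * seqFn f n) else 4 * seqFn f n * seqFn f n + 1)
    split
    · exact hfgt _
    · omega
  · intro k
    cases k with
    | zero => simp only [seqFn]; exact hfs 1
    | succ k =>
      have h1 : 2 * (k + 1) = (2 * k + 1) + 1 := by ring
      rw [h1, seqFn]
      have hev : Even (2 * k + 1 + 1) := ⟨k + 1, by ring⟩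
      rw [if_pos hev]
      exact hfs _

lemma exists_nonprincipal_mem {s : Set ℕ} (hs : s.Infinite) :
    ∃ u : Ultrafilter ℕ, (∀ n : ℕ, u ≠ pure n) ∧ s ∈ u := by
  haveI : NeBot (cofinite ⊓ 𝓟 s) := hs.cofinite_inf_principal_neBot
  refine ⟨Ultrafilter.of (cofinite ⊓ 𝓟 s), ?_, ?_⟩
  · intro n hn
    have h2 : ({n}ᶜ : Set ℕ) ∈ Ultrafilter.of (cofinite ⊓ 𝓟 s) :=
      Ultrafilter.of_le _ (mem_inf_of_left (Set.finite_singleton n).compl_mem_cofinite)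
    rw [hn] at h2
    simp at h2
  · exact Ultrafilter.of_le _ (mem_inf_of_right (mem_principal_self s))

lemma eventually_ne (u : Ultrafilter ℕ) (hu : ∀ n : ℕ, u ≠ pure n) (a : ℕ) :
    ∀ᶠ c in (u : Filter ℕ), c ≠ a := by
  have h1 : ({a}ᶜ : Set ℕ) ∈ u := by
    by_contra hmem
    rw [Ultrafilter.compl_mem_iff_notMem, not_not] at hmem
    obtain ⟨x, hx, hux⟩ := Ultrafilter.eq_pure_of_finite_mem (Set.finite_singleton a) hmem
    exact hu x hux
  filter_upwards [h1] with c hc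
  simpa using hc

lemma key (h2 : ∀ n, 2 ≤ e n) (hg : ∀ n, 4 * e n * e n < e (n + 1))
    (u : Ultrafilter ℕ) (hu : ∀ n : ℕ, u ≠ pure n)
    (hB : {x : ℕ | ∃ k, e (2 * k) = x} ∈ u) :
    ∃ v w : Ultrafilter ℕ, (∀ n : ℕ, v ≠ pure n) ∧ (∀ n : ℕ, w ≠ pure n) ∧
      u * (v + w) ≠ u * v + u * w := by
  have hCinf : {x : ℕ | ∃ k, e (2 * k + 1) = x}.Infinite := by
    have hinj : Function.Injective (fun k : ℕ => e (2 * k + 1)) := by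
      intro a b hab
      have := (e_mono h2 hg).injective hab
      omega
    exact Set.infinite_range_of_injective hinj
  obtain ⟨v, hv, hCv⟩ := exists_nonprincipal_mem hCinf
  refine ⟨v, v, hv, hv, ?_⟩
  intro heq
  set B := {x : ℕ | ∃ k, e (2 * k) = x} with hBdef
  set C := {x : ℕ | ∃ k, e (2 * k + 1) = x} with hCdef
  set A₀ := {x : ℕ | ∃ a ∈ B, ∃ b ∈ C, ∃ c ∈ C, x = a * (b + c)} with hA₀def
  have hBe : ∀ᶠ a in (u : Filter ℕ), a ∈ B := hB
  have hCe : ∀ᶠ b in (v : Filter ℕ), b ∈ C := hCv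
  have hmem : ∀ᶠ x in ↑(u * (v + v)), x ∈ A₀ := by
    rw [Ultrafilter.eventually_mul]
    filter_upwards [hBe] with a ha
    rw [Ultrafilter.eventually_add]
    filter_upwards [hCe] with b hb
    filter_upwards [hCe] with c hc
    exact ⟨a, ha, b, hb, c, hc, rfl⟩
  have hmem2 : ∀ᶠ x in ↑(u * v + u * v), x ∈ A₀ := by rw [← heq]; exact hmem
  have H1 := (Ultrafilter.eventually_add (u * v) (u * v) (· ∈ A₀)).mp hmem2
  have H2 := (Ultrafilter.eventually_mul u v _).mp H1
  obtain ⟨a, ha1, ha2⟩ := (H2.and hBe).exists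
  obtain ⟨b, hb1, hb2⟩ := (ha1.and hCe).exists
  have H3 := (Ultrafilter.eventually_mul u v _).mp hb1
  obtain ⟨c, hc1, hc2, hc3⟩ := (H3.and (hBe.and (eventually_ne u hu a))).exists
  obtain ⟨d, hd1, hd2⟩ := (hc1.and hCe).exists
  obtain ⟨i, hi⟩ := ha2
  obtain ⟨j, hj⟩ := hb2
  obtain ⟨k, hk⟩ := hc2
  obtain ⟨l, hl⟩ := hd2
  obtain ⟨a', ⟨i', hi'⟩, b', ⟨j', hj'⟩, c', ⟨k', hk'⟩, heq'⟩ := hd1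
  have hik : i ≠ k := by
    rintro rfl
    rw [← hi, ← hk] at hc3
    exact hc3 rfl
  refine star h2 hg i j k l i' j' k' hik ?_
  rw [hi, hj, hk, hl, hi', hj', hk']
  exact heq'

theorem stmt_8' :
    IsNowhereDense {u : {u : Ultrafilter ℕ // ∀ n : ℕ, u ≠ pure n} |
      ∀ v w : {u : Ultrafilter ℕ // ∀ n : ℕ, u ≠ pure n},
        (u : Ultrafilter ℕ) * ((v : Ultrafilter ℕ) + (w : Ultrafilter ℕ)) =
          (u : Ultrafilter ℕ) * v + (u : Ultrafilter ℕ) * w} := by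
  set S := {u : {u : Ultrafilter ℕ // ∀ n : ℕ, u ≠ pure n} |
      ∀ v w : {u : Ultrafilter ℕ // ∀ n : ℕ, u ≠ pure n},
        (u : Ultrafilter ℕ) * ((v : Ultrafilter ℕ) + (w : Ultrafilter ℕ)) =
          (u : Ultrafilter ℕ) * v + (u : Ultrafilter ℕ) * w} with hSdef
  show interior (closure S) = ∅
  rw [Set.eq_empty_iff_forall_notMem]
  intro x hx
  obtain ⟨t, hts, htop, hxt⟩ := mem_interior.mp hx
  obtain ⟨V, hV, rfl⟩ := isOpen_induced_iff.mp htop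
  have hxV : (x : Ultrafilter ℕ) ∈ V := hxt
  obtain ⟨b, hbB, hxb, hbV⟩ := ultrafilterBasis_is_basis.exists_subset_of_mem_open hxV hV
  obtain ⟨s, rfl⟩ := hbB
  have hsx : s ∈ (x : Ultrafilter ℕ) := hxb
  have hsinf : s.Infinite := by
    intro hfin
    obtain ⟨n, _, hn⟩ := Ultrafilter.eq_pure_of_finite_mem hfin hsx
    exact x.prop n hn
  obtain ⟨e, h2, hg, hmemA⟩ := exists_seq hsinf
  have hBinf : {m : ℕ | ∃ k, e (2 * k) = m}.Infinite := by
    have hinj : Function.Injective (fun k : ℕ => e (2 * k)) := by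
      intro a b hab
      have := (e_mono h2 hg).injective hab
      omega
    exact Set.infinite_range_of_injective hinj
  obtain ⟨u₀, hu₀, hBu₀⟩ := exists_nonprincipal_mem hBinf
  have hsu₀ : s ∈ u₀ := by
    refine mem_of_superset hBu₀ ?_
    rintro m ⟨k, rfl⟩
    exact hmemA k
  set x₀ : {u : Ultrafilter ℕ // ∀ n : ℕ, u ≠ pure n} := ⟨u₀, hu₀⟩ with hx₀def
  have hx₀t : x₀ ∈ Subtype.val ⁻¹' V := hbV hsu₀
  set W : Set {u : Ultrafilter ℕ // ∀ n : ℕ, u ≠ pure n} := (Subtype.val ⁻¹' V) ∩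
      (Subtype.val ⁻¹' {u : Ultrafilter ℕ | {m : ℕ | ∃ k, e (2 * k) = m} ∈ u}) with hWdef
  have hWopen : IsOpen W := ((hV.preimage continuous_subtype_val).inter
    ((ultrafilter_isOpen_basic _).preimage continuous_subtype_val))
  have hx₀W : x₀ ∈ W := ⟨hx₀t, hBu₀⟩
  have hx₀cl : x₀ ∈ closure S := hts hx₀t
  obtain ⟨y, hyW, hyS⟩ := mem_closure_iff.mp hx₀cl W hWopen hx₀W
  obtain ⟨v, w, hv, hw, hne⟩ := key h2 hg y.val y.prop hyW.2
  exact hne (hyS ⟨v, hv⟩ ⟨w, hw⟩)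

end VanDouwenAux

/-- (van Douwen) The set of `u ∈ ℕ*` that left-distribute over all `v, w ∈ ℕ*`
is nowhere dense in `ℕ*`. -/
theorem stmt_8 :
    IsNowhereDense {u : {u : Ultrafilter ℕ // ∀ n : ℕ, u ≠ pure n} |
      ∀ v w : {u : Ultrafilter ℕ // ∀ n : ℕ, u ≠ pure n},
        (u : Ultrafilter ℕ) * ((v : Ultrafilter ℕ) + (w : Ultrafilter ℕ)) =
          (u : Ultrafilter ℕ) * v + (u : Ultrafilter ℕ) * w} :=
  VanDouwenAux.stmt_8'
end

section
/- (van Douwen) The set {u ∈ ℕ* : for all v, w ∈ ℕ*, (u+v)·w = u·w + v·w} is nowhere dense in ℕ*. -/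
attribute [local instance] Ultrafilter.mul Ultrafilter.add

open Filter

namespace VanDouwenAux

/-- The sparse sequence `2 ^ 9 ^ i`. -/
def c (i : ℕ) : ℕ := 2 ^ 9 ^ i

def C : Set ℕ := Set.range c

lemma c_strictMono : StrictMono c := fun i j h =>
  Nat.pow_lt_pow_right (by norm_num) (Nat.pow_lt_pow_right (by norm_num) h)

lemma two_le_c (i : ℕ) : 2 ≤ c i := by
  have : (2:ℕ)^1 ≤ 2 ^ 9 ^ i := Nat.pow_le_pow_right (by norm_num) (Nat.one_le_pow _ _ (by norm_num))
  simpa [c] using this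

lemma two_le_of_mem_C {x : ℕ} (hx : x ∈ C) : 2 ≤ x := by
  rcases hx with ⟨i, rfl⟩; exact two_le_c i

lemma C_pow_nine {x y : ℕ} (hx : x ∈ C) (hy : y ∈ C) (h : x < y) : x ^ 9 ≤ y := by
  rcases hx with ⟨i, rfl⟩; rcases hy with ⟨j, rfl⟩
  have hij : i < j := by
    by_contra hc
    exact absurd (c_strictMono.le_iff_le.2 (le_of_not_gt hc)) (not_le.2 h)
  calc c i ^ 9 = 2 ^ (9 ^ i * 9) := by rw [c, ← pow_mul]
  _ ≤ 2 ^ 9 ^ j := by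
      apply Nat.pow_le_pow_right (by norm_num)
      calc 9 ^ i * 9 = 9 ^ (i+1) := by ring
      _ ≤ 9 ^ j := Nat.pow_le_pow_right (by norm_num) hij

lemma C_infinite : C.Infinite := Set.infinite_range_of_injective c_strictMono.injective

/-- The distinguishing set. -/
def A : Set ℕ :=
  {x | ∃ n k m k', 1 ≤ n ∧ k ∈ C ∧ m ∈ C ∧ k' ∈ C ∧
    n * k < m ∧ (n * k + m) ^ 2 < k' ∧ x = n * k + m * k'}

lemma not_mem_A {n m k : ℕ} (hm : m ∈ C) (hk : k ∈ C) (hnm : n < m) (hmk : m < k) :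
    (n + m) * k ∉ A := by
  rintro ⟨n₁, k₁, m₁, k₁', hn₁, hk₁, hm₁, hk₁', h5, h6, hx⟩
  have h2m : 2 ≤ m := two_le_of_mem_C hm
  have h2k : 2 ≤ k := two_le_of_mem_C hk
  have h2m₁ : 2 ≤ m₁ := two_le_of_mem_C hm₁
  have h2k₁ : 2 ≤ k₁ := two_le_of_mem_C hk₁
  have h2k₁' : 2 ≤ k₁' := two_le_of_mem_C hk₁'
  set x := (n + m) * k with hxdef
  -- basic bounds
  have hn₁k₁ : 2 ≤ n₁ * k₁ := le_trans h2k₁ (Nat.le_mul_of_pos_left _ hn₁)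
  set p := n₁ * k₁ + m₁ with hp
  have hp4 : 4 ≤ p := by omega
  have hpk : p < k₁' := lt_of_le_of_lt (Nat.le_self_pow (by norm_num) p) h6
  have hn₁k₁_lt : n₁ * k₁ < k₁' := lt_of_le_of_lt (by omega) hpk
  -- x ≥ 2 * k₁'
  have hxge : 2 * k₁' ≤ x := by
    rw [hx]
    have : 2 * k₁' ≤ m₁ * k₁' := Nat.mul_le_mul_right _ h2m₁
    omega
  -- x < k₁' ^ 2
  have hxlt2 : x < k₁' ^ 2 := by
    rw [hx]
    have h1 : n₁ * k₁ + m₁ * k₁' < (m₁ + 1) * k₁' := by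
      have := hn₁k₁_lt; ring_nf; omega
    have h2 : (m₁ + 1) * k₁' ≤ p * k₁' := Nat.mul_le_mul_right _ (by omega)
    have h3 : p * k₁' < k₁' * k₁' := mul_lt_mul_of_pos_right hpk (by omega)
    calc n₁ * k₁ + m₁ * k₁' < (m₁ + 1) * k₁' := h1
    _ ≤ p * k₁' := h2
    _ < k₁' * k₁' := h3
    _ = k₁' ^ 2 := (sq k₁').symm
  -- x < 2 * k ^ 2
  have hxlt : x < 2 * k ^ 2 := by
    have h1 : n + m < 2 * m := by omega
    have h2 : x < 2 * m * k := by
      rw [hxdef]; exact mul_lt_mul_of_pos_right h1 (by omega)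
    have h3 : 2 * m * k ≤ 2 * k * k := by
      apply Nat.mul_le_mul_right
      omega
    calc x < 2 * m * k := h2
    _ ≤ 2 * k * k := h3
    _ = 2 * k ^ 2 := by ring
  -- x ≥ 2 * k
  have hxgk : 2 * k ≤ x := by
    rw [hxdef]
    exact Nat.mul_le_mul_right _ (by omega)
  rcases lt_trichotomy k k₁' with hlt | heq | hgt
  · -- k < k₁' : then k ^ 9 ≤ k₁' ≤ x but x < 2 k^2 ≤ k^9
    have h9 : k ^ 9 ≤ k₁' := C_pow_nine hk hk₁' hlt
    have : 2 * k ^ 2 ≤ k ^ 9 := by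
      calc 2 * k ^ 2 ≤ k * k ^ 2 := Nat.mul_le_mul_right _ h2k
      _ = k ^ 3 := by ring
      _ ≤ k ^ 9 := Nat.pow_le_pow_right (by omega) (by norm_num)
    omega
  · -- k = k₁' : mod contradiction
    subst heq
    have hmod0 : x % k = 0 := by
      rw [hxdef]; exact Nat.mul_mod_left _ _
    have hmod1 : x % k = n₁ * k₁ := by
      rw [hx, Nat.add_mul_mod_self_right]
      exact Nat.mod_eq_of_lt hn₁k₁_lt
    omega
  · -- k₁' < k : then k₁'^9 ≤ k, and x < k₁'^2 ≤ k₁'^9 ≤ k ≤ x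
    have h9 : k₁' ^ 9 ≤ k := C_pow_nine hk₁' hk hgt
    have : k₁' ^ 2 ≤ k₁' ^ 9 := Nat.pow_le_pow_right (by omega) (by norm_num)
    omega

theorem main (u w : Ultrafilter ℕ) (hu : ↑u ≤ (cofinite : Filter ℕ))
    (hw : ↑w ≤ (cofinite : Filter ℕ)) (hwC : C ∈ w) :
    (u + w) * w ≠ u * w + w * w := by
  intro heq
  have hwC' : ∀ᶠ k in (w : Filter ℕ), k ∈ C := hwC
  have hgt : ∀ t : ℕ, ∀ᶠ m in (w : Filter ℕ), t < m := fun t =>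
    hw (by rw [Nat.cofinite_eq_atTop]; exact Filter.eventually_gt_atTop t)
  have hu1 : ∀ᶠ n in (u : Filter ℕ), 1 ≤ n :=
    hu (by rw [Nat.cofinite_eq_atTop]; exact Filter.eventually_ge_atTop 1)
  -- A ∈ u*w + w*w
  have hmem : ∀ᶠ x in ↑(u * w + w * w), x ∈ A := by
    rw [Ultrafilter.eventually_add, Ultrafilter.eventually_mul]
    apply hu1.mono
    intro n hn
    apply hwC'.mono
    intro k hk
    rw [Ultrafilter.eventually_mul]
    apply ((hgt (n * k)).and hwC').mono
    rintro m ⟨hm1, hm2⟩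
    apply ((hgt ((n * k + m) ^ 2)).and hwC').mono
    rintro k' ⟨hk1, hk2⟩
    exact ⟨n, k, m, k', hn, hk, hm2, hk2, hm1, hk1, rfl⟩
  -- A ∉ (u+w)*w
  have hnmem : ¬ ∀ᶠ x in ↑((u + w) * w), x ∈ A := by
    intro hmem'
    rw [Ultrafilter.eventually_mul, Ultrafilter.eventually_add] at hmem'
    have hbad : ∀ᶠ n in (u : Filter ℕ), ∀ᶠ m in (w : Filter ℕ),
        ∀ᶠ k in (w : Filter ℕ), (n + m) * k ∉ A := by
      apply Filter.Eventually.of_forall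
      intro n
      apply ((hgt n).and hwC').mono
      rintro m ⟨hm1, hm2⟩
      apply ((hgt m).and hwC').mono
      rintro k ⟨hk1, hk2⟩
      exact not_mem_A hm2 hk2 hm1 hk1
    obtain ⟨n, h1, h2⟩ := (hmem'.and hbad).exists
    obtain ⟨m, h1, h2⟩ := (h1.and h2).exists
    obtain ⟨k, h1, h2⟩ := (h1.and h2).exists
    exact h2 h1
  rw [heq] at hnmem
  exact hnmem hmem

end VanDouwenAux

open VanDouwenAux in
/-- (van Douwen) The set of `u ∈ ℕ*` that right-distribute over all `v, w ∈ ℕ*`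
is nowhere dense in `ℕ*`. -/
theorem stmt_9 :
    IsNowhereDense {u : {u : Ultrafilter ℕ // ∀ n : ℕ, u ≠ pure n} |
      ∀ v w : {u : Ultrafilter ℕ // ∀ n : ℕ, u ≠ pure n},
        ((u : Ultrafilter ℕ) + (v : Ultrafilter ℕ)) * (w : Ultrafilter ℕ) =
          (u : Ultrafilter ℕ) * w + (v : Ultrafilter ℕ) * w} := by
  haveI : (Filter.cofinite ⊓ Filter.principal C).NeBot :=
    C_infinite.cofinite_inf_principal_neBot
  set w0 : Ultrafilter ℕ := Ultrafilter.of (Filter.cofinite ⊓ Filter.principal C) with hw0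
  have hle : ↑w0 ≤ Filter.cofinite ⊓ Filter.principal C :=
    Ultrafilter.of_le _
  have hwcof : ↑w0 ≤ (Filter.cofinite : Filter ℕ) := hle.trans inf_le_left
  have hwC : C ∈ w0 := le_principal_iff.mp (hle.trans inf_le_right)
  have hnp : ∀ n : ℕ, w0 ≠ pure n := by
    intro n h
    have hmem : ({n} : Set ℕ)ᶜ ∈ w0 := hwcof ((Set.finite_singleton n).compl_mem_cofinite)
    rw [h] at hmem
    simp at hmem
  have hempty : {u : {u : Ultrafilter ℕ // ∀ n : ℕ, u ≠ pure n} |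
      ∀ v w : {u : Ultrafilter ℕ // ∀ n : ℕ, u ≠ pure n},
        ((u : Ultrafilter ℕ) + (v : Ultrafilter ℕ)) * (w : Ultrafilter ℕ) =
          (u : Ultrafilter ℕ) * w + (v : Ultrafilter ℕ) * w} = ∅ := by
    rw [Set.eq_empty_iff_forall_notMem]
    intro u hu
    have hucof : ↑u.1 ≤ (Filter.cofinite : Filter ℕ) := by
      rcases Ultrafilter.le_cofinite_or_eq_pure u.1 with h | ⟨a, ha⟩
      · exact h
      · exact absurd ha (u.2 a)
    exact main u.1 w0 hucof hwcof hwC (hu ⟨w0, hnp⟩ ⟨w0, hnp⟩)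
  rw [hempty]
  simp [IsNowhereDense]
end

section
/- The algebra (ℕ*, +, ·) has no common idempotents: there is no nonprincipal ultrafilter u on ℕ with u + u = u and u · u = u. -/
attribute [local instance] Ultrafilter.mul Ultrafilter.add

open Filter Real

namespace NCI

/-- log base 2 of a natural number, as a real. -/
noncomputable def L (n : ℕ) : ℝ := Real.logb 2 n

lemma mem_add_iff {p q : Ultrafilter ℕ} {s : Set ℕ} :
    s ∈ p + q ↔ {x | {y | x + y ∈ s} ∈ q} ∈ p :=
  Ultrafilter.eventually_add p q (· ∈ s)

lemma mem_mul_iff {p q : Ultrafilter ℕ} {s : Set ℕ} :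
    s ∈ p * q ↔ {x | {y | x * y ∈ s} ∈ q} ∈ p :=
  Ultrafilter.eventually_mul p q (· ∈ s)

section main

variable {p : Ultrafilter ℕ} (hnp : ∀ n : ℕ, p ≠ pure n)
  (hadd : p + p = p) (hmul : p * p = p)

/-- finite sets are not in a nonprincipal ultrafilter -/
lemma not_mem_of_finite (hnp : ∀ n : ℕ, p ≠ pure n) {s : Set ℕ} (hs : s.Finite) : s ∉ p := by
  intro h
  obtain ⟨x, -, hx⟩ := Ultrafilter.eq_pure_of_finite_mem hs h
  exact hnp x hx

lemma cofinite_mem (hnp : ∀ n : ℕ, p ≠ pure n) (N : ℕ) : {n : ℕ | N ≤ n} ∈ p := by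
  have : {n : ℕ | N ≤ n} = {n : ℕ | n < N}ᶜ := by ext n; simp only [Set.mem_compl_iff, Set.mem_setOf_eq, not_lt]
  rw [this, Ultrafilter.compl_mem_iff_notMem]
  exact not_mem_of_finite hnp (Set.finite_Iio N)

/-- pigeonhole: a map with finitely many values takes a single value p-a.e. -/
lemma exists_fiber_mem (hK : 0 < K) (f : ℕ → ℕ) (hf : ∀ n, f n < K) :
    ∃ c < K, {n : ℕ | f n = c} ∈ p := by
  have h1 : {r : ℕ | r < K} ∈ p.map f := by
    have : {n : ℕ | f n ∈ {r : ℕ | r < K}} = Set.univ := by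
      ext n; simp [hf n]
    simp only [Ultrafilter.mem_map, Set.preimage, this]
    exact Filter.univ_mem
  obtain ⟨c, hc, hc2⟩ := Ultrafilter.eq_pure_of_finite_mem (Set.finite_Iio K) h1
  refine ⟨c, hc, ?_⟩
  have : {c} ∈ p.map f := by rw [hc2]; exact rfl
  simpa [Ultrafilter.mem_map, Set.preimage] using this

lemma pick2 {s t : Set ℕ} (hs : s ∈ p) (ht : t ∈ p) : ∃ x, x ∈ s ∧ x ∈ t :=
  Filter.nonempty_of_mem (Filter.inter_mem hs ht)

lemma pick3 {s t r : Set ℕ} (hs : s ∈ p) (ht : t ∈ p) (hr : r ∈ p) :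
    ∃ x, x ∈ s ∧ x ∈ t ∧ x ∈ r := by
  obtain ⟨x, hx1, hx2, hx3⟩ := Filter.nonempty_of_mem
    (Filter.inter_mem hs (Filter.inter_mem ht hr))
  exact ⟨x, hx1, hx2, hx3⟩

/-- From additive idempotency: divisibility by powers of two, p-a.e. -/
lemma pow_two_dvd_mem (hadd : p + p = p) (k : ℕ) : {n : ℕ | 2 ^ k ∣ n} ∈ p := by
  set M := 2 ^ k with hM
  have hMpos : 0 < M := Nat.pow_pos (by norm_num)
  obtain ⟨c, hcM, hc⟩ := exists_fiber_mem (p := p) hMpos (fun n => n % M)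
    (fun n => Nat.mod_lt _ hMpos)
  have h2 : {n : ℕ | n % M = c} ∈ p + p := by rw [hadd]; exact hc
  rw [mem_add_iff] at h2
  obtain ⟨x, hx1, hx2⟩ := pick2 (p := p) h2 hc
  obtain ⟨y, hy1, hy2⟩ := pick2 (p := p) hx1 hc
  have hsum : (c + c) % M = c := by
    have : (x + y) % M = (x % M + y % M) % M := Nat.add_mod x y M
    rw [hx2, hy2] at this; rw [← this]; exact hy1
  have hc0 : c = 0 := by
    rcases Nat.lt_or_ge (c + c) M with h | h
    · rw [Nat.mod_eq_of_lt h] at hsum; omega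
    · rw [Nat.mod_eq_sub_mod h, Nat.mod_eq_of_lt (by omega)] at hsum; omega
  subst hc0
  have : {n : ℕ | n % M = 0} = {n : ℕ | 2 ^ k ∣ n} := by
    ext n; simp [hM, Nat.dvd_iff_mod_eq_zero]
  rwa [this] at hc

lemma val_add_eq {x y : ℕ} (hx : x ≠ 0) (hy : 2 ^ (padicValNat 2 x + 1) ∣ y) :
    padicValNat 2 (x + y) = padicValNat 2 x := by
  haveI : Fact (Nat.Prime 2) := ⟨Nat.prime_two⟩
  set A := padicValNat 2 x with hA
  have hA1 : 2 ^ A ∣ x := pow_padicValNat_dvd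
  have hA2 : ¬ 2 ^ (A + 1) ∣ x := pow_succ_padicValNat_not_dvd hx
  have hxy0 : x + y ≠ 0 := by positivity
  have le1 : A ≤ padicValNat 2 (x + y) :=
    (padicValNat_dvd_iff_le hxy0).mp
      (dvd_add hA1 (dvd_trans (pow_dvd_pow 2 (Nat.le_succ A)) hy))
  have le2 : ¬ (A + 1 ≤ padicValNat 2 (x + y)) := by
    intro h
    have hd : 2 ^ (A + 1) ∣ (x + y) := (padicValNat_dvd_iff_le hxy0).mpr h
    have : 2 ^ (A + 1) ∣ x := by
      have := Nat.dvd_sub hd hy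
      simpa using this
    exact hA2 this
  omega

/-- Powers of two do not form a p-large set. -/
lemma pow_two_not_mem (hnp : ∀ n : ℕ, p ≠ pure n) (hadd : p + p = p) :
    {n : ℕ | ∃ k : ℕ, n = 2 ^ k} ∉ p := by
  intro hP
  have h2 : {n : ℕ | ∃ k : ℕ, n = 2 ^ k} ∈ p + p := by rw [hadd]; exact hP
  rw [mem_add_iff] at h2
  obtain ⟨x, hx1, hx2⟩ := pick2 (p := p) h2 (cofinite_mem hnp 1)
  set A := padicValNat 2 x with hA
  obtain ⟨y, hy1, hy2, hy3⟩ := pick3 (p := p) hx1 (pow_two_dvd_mem hadd (A + 1))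
    (cofinite_mem hnp 1)
  obtain ⟨j, hj⟩ := hy1
  have hval : padicValNat 2 (x + y) = A := val_add_eq (by simp at hx2 ⊢; omega) hy2
  rw [hj, padicValNat.prime_pow] at hval
  have hdvd : 2 ^ A ∣ x := pow_padicValNat_dvd
  have hle : 2 ^ A ≤ x := Nat.le_of_dvd (by simp at hx2; omega) hdvd
  rw [hval] at hj
  simp only [Set.mem_setOf_eq] at hy3 hx2
  omega

lemma L_mul {x y : ℕ} (hx : 1 ≤ x) (hy : 1 ≤ y) : L (x * y) = L x + L y := by
  unfold L
  rw [Nat.cast_mul]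
  exact Real.logb_mul (by exact_mod_cast Nat.one_le_iff_ne_zero.mp hx)
    (by exact_mod_cast Nat.one_le_iff_ne_zero.mp hy)

/-- From multiplicative idempotency: `log₂ n` is near an integer, p-a.e. -/
lemma log_near_int_mem (hnp : ∀ n : ℕ, p ≠ pure n) (hmul : p * p = p) {ε : ℝ} (hε : 0 < ε) :
    {n : ℕ | 1 ≤ n ∧ ∃ m : ℤ, |L n - m| ≤ ε} ∈ p := by
  obtain ⟨K, hK⟩ := exists_nat_gt (max 4 (2 / ε))
  have hK4 : (4 : ℝ) < K := lt_of_le_of_lt (le_max_left _ _) hK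
  have hKpos : (0 : ℝ) < K := by linarith
  have hKnat : 0 < K := by exact_mod_cast hKpos
  set δ : ℝ := 1 / K with hδdef
  have hδpos : 0 < δ := by positivity
  have hδ4 : δ ≤ 1 / 4 := by
    rw [hδdef, div_le_div_iff₀ hKpos (by norm_num)]; linarith
  have hδK : δ * K = 1 := by rw [hδdef]; field_simp
  have h2δε : 2 * δ ≤ ε := by
    have h1 : 2 / ε < K := lt_of_le_of_lt (le_max_right _ _) hK
    rw [div_lt_iff₀ hε] at h1
    nlinarith [mul_lt_mul_of_pos_left h1 hδpos]
  have hfloorlt : ∀ n : ℕ, ⌊Int.fract (L n) / δ⌋₊ < K := by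
    intro n
    rw [Nat.floor_lt (div_nonneg (Int.fract_nonneg _) hδpos.le)]
    rw [div_lt_iff₀ hδpos]
    have h1 : Int.fract (L n) < 1 := Int.fract_lt_one _
    have h2 : (1 : ℝ) ≤ K * δ := by rw [hδdef]; field_simp; rfl
    linarith
  obtain ⟨c, hcK, hc⟩ := exists_fiber_mem (p := p) hKnat
    (fun n => ⌊Int.fract (L n) / δ⌋₊) hfloorlt
  -- the fiber set, intersected with n ≥ 1
  set J : Set ℕ := {n : ℕ | 1 ≤ n ∧ c * δ ≤ Int.fract (L n) ∧ Int.fract (L n) < (c + 1) * δ}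
    with hJdef
  have hJmem : J ∈ p := by
    have h1 : {n : ℕ | ⌊Int.fract (L n) / δ⌋₊ = c} ∩ {n : ℕ | 1 ≤ n} ⊆ J := by
      rintro n ⟨h2, h3⟩
      simp only [Set.mem_setOf_eq] at h2 h3
      have h4 := (Nat.floor_eq_iff (div_nonneg (Int.fract_nonneg _) hδpos.le)).mp h2
      refine ⟨h3, ?_, ?_⟩
      · calc (c : ℝ) * δ ≤ (Int.fract (L n) / δ) * δ := by
              apply mul_le_mul_of_nonneg_right h4.1 (le_of_lt hδpos)
        _ = Int.fract (L n) := by field_simp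
      · have := h4.2
        calc Int.fract (L n) = (Int.fract (L n) / δ) * δ := by field_simp
        _ < ((c : ℝ) + 1) * δ := by
              apply mul_lt_mul_of_pos_right this hδpos
    exact Filter.mem_of_superset (Filter.inter_mem hc (cofinite_mem hnp 1)) h1
  -- pick x, y with x, y, x*y all in J
  have h2 : J ∈ p * p := by rw [hmul]; exact hJmem
  rw [mem_mul_iff] at h2
  obtain ⟨x, hx1, hx2⟩ := pick2 (p := p) h2 hJmem
  obtain ⟨y, hy1, hy2⟩ := pick2 (p := p) hx1 hJmem
  obtain ⟨hx0, hxl, hxu⟩ := hx2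
  obtain ⟨hy0, hyl, hyu⟩ := hy2
  obtain ⟨hxy0, hxyl, hxyu⟩ := hy1
  -- the key integer
  have hLmul : L (x * y) = L x + L y := L_mul hx0 hy0
  have hkey : Int.fract (L x) + Int.fract (L y) - Int.fract (L (x * y))
      = ((⌊L (x * y)⌋ - ⌊L x⌋ - ⌊L y⌋ : ℤ) : ℝ) := by
    simp only [Int.fract]
    push_cast
    rw [hLmul]; ring
  set z : ℤ := ⌊L (x * y)⌋ - ⌊L x⌋ - ⌊L y⌋ with hzdef
  have hcδ1 : (c : ℝ) * δ < 1 := lt_of_le_of_lt hxl (Int.fract_lt_one _)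
  have hz01 : z = 0 ∨ z = 1 := by
    have hlo : (-1 : ℝ) < z := by rw [← hkey]; nlinarith
    have hhi : (z : ℝ) < 2 := by rw [← hkey]; nlinarith
    have hlo' : (-1 : ℤ) < z := by exact_mod_cast hlo
    have hhi' : z < 2 := by exact_mod_cast hhi
    omega
  have hcase : (c : ℝ) * δ < δ ∨ 1 - 2 * δ < (c : ℝ) * δ := by
    rcases hz01 with h | h
    · left
      rw [h] at hkey
      simp only [Int.cast_zero] at hkey
      nlinarith
    · right
      rw [h] at hkey
      simp only [Int.cast_one] at hkey
      nlinarith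
  refine Filter.mem_of_superset hJmem ?_
  rintro n ⟨hn0, hnl, hnu⟩
  refine ⟨hn0, ?_⟩
  have hexp : ((c : ℝ) + 1) * δ = c * δ + δ := by ring
  have hf1 : Int.fract (L n) < 1 := Int.fract_lt_one _
  rcases hcase with h | h
  · refine ⟨⌊L n⌋, ?_⟩
    rw [Int.self_sub_floor, abs_of_nonneg (Int.fract_nonneg _)]
    linarith
  · refine ⟨⌊L n⌋ + 1, ?_⟩
    have h1 : L n - ((⌊L n⌋ + 1 : ℤ) : ℝ) = Int.fract (L n) - 1 := by
      push_cast
      simp only [Int.fract]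
      ring
    rw [h1, abs_of_nonpos (by linarith)]
    linarith

lemma eq_pow_of_L_eq_int {x : ℕ} (hx : 1 ≤ x) {m : ℤ} (h : L x = m) :
    ∃ k : ℕ, x = 2 ^ k := by
  have hm0 : 0 ≤ m := by
    have h0 : (0 : ℝ) ≤ L x := Real.logb_nonneg (by norm_num) (by exact_mod_cast hx)
    rw [h] at h0; exact_mod_cast h0
  refine ⟨m.toNat, ?_⟩
  have hx0 : (0 : ℝ) < (x : ℝ) := by exact_mod_cast hx
  have h2 : (2 : ℝ) ^ (L x) = (x : ℝ) := Real.rpow_logb (by norm_num) (by norm_num) hx0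
  rw [h] at h2
  have h3 : ((2 ^ m.toNat : ℕ) : ℝ) = (x : ℝ) := by
    push_cast
    rw [← Real.rpow_natCast 2 m.toNat, ← h2]
    congr 1
    exact_mod_cast Int.toNat_of_nonneg hm0
  exact_mod_cast h3.symm

/-- The crucial set: `n` such that `log₂ n` is within `2 ^ (-v₂ n)` of an integer. -/
noncomputable def G : Set ℕ :=
  {n : ℕ | 2 ≤ n ∧ ∃ m : ℤ, |L n - m| ≤ ((2 : ℝ) ^ padicValNat 2 n)⁻¹}

lemma G_mem (hnp : ∀ n : ℕ, p ≠ pure n) (hadd : p + p = p) (hmul : p * p = p) : G ∈ p := by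
  rw [← hadd, mem_add_iff]
  refine Filter.mem_of_superset (cofinite_mem hnp 1) ?_
  intro x hx
  simp only [Set.mem_setOf_eq] at hx ⊢
  set A := padicValNat 2 x with hA
  have hY1 : {y : ℕ | 2 ^ (A + 1) ∣ y} ∈ p := pow_two_dvd_mem hadd (A + 1)
  have hY2 : {y : ℕ | 1 ≤ y ∧ ∃ m : ℤ, |L y - m| ≤ ((2 : ℝ) ^ (A + 3))⁻¹} ∈ p :=
    log_near_int_mem hnp hmul (by positivity)
  have hY3 : {y : ℕ | x * 2 ^ (A + 5) ≤ y} ∈ p := cofinite_mem hnp _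
  refine Filter.mem_of_superset
    (Filter.inter_mem hY1 (Filter.inter_mem hY2 hY3)) ?_
  rintro y ⟨hy1, ⟨hy0, m, hm⟩, hy3⟩
  simp only [Set.mem_setOf_eq] at hy1 hy3
  -- facts about x and y
  have hx0 : x ≠ 0 := by omega
  have hyx : x * 2 ^ (A + 5) ≤ y := hy3
  have hy2 : 2 ≤ y := by
    have h32 : (32 : ℕ) ≤ 2 ^ (A + 5) := by
      calc (32 : ℕ) = 2 ^ 5 := by norm_num
      _ ≤ 2 ^ (A + 5) := Nat.pow_le_pow_right (by norm_num) (by omega)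
    nlinarith
  have hval : padicValNat 2 (x + y) = A := val_add_eq hx0 hy1
  -- real estimates
  have hxR : (0 : ℝ) < (x : ℝ) := by exact_mod_cast Nat.pos_of_ne_zero hx0
  have hyR : (0 : ℝ) < (y : ℝ) := by positivity -- fix
  have hxyR : (0 : ℝ) < ((x : ℝ) + y) := by positivity
  have h2A : (0 : ℝ) < (2 : ℝ) ^ A := by positivity
  -- L (x + y) - L y = logb 2 ((x+y)/y), between 0 and (2^(A+4))⁻¹
  have hLd : L (x + y) - L y = Real.logb 2 (((x : ℝ) + y) / y) := by
    unfold L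
    push_cast
    rw [Real.logb_div (by positivity) (by positivity)]
  have hlow : 0 ≤ L (x + y) - L y := by
    rw [hLd]
    apply Real.logb_nonneg (by norm_num)
    rw [le_div_iff₀ hyR]
    linarith
  have hxy_div : (x : ℝ) / y ≤ ((2 : ℝ) ^ (A + 5))⁻¹ := by
    rw [div_le_iff₀ hyR]
    have : ((x : ℝ) * 2 ^ (A + 5)) ≤ (y : ℝ) := by exact_mod_cast hyx
    calc (x : ℝ) = (x * 2 ^ (A + 5)) * ((2:ℝ) ^ (A + 5))⁻¹ := by
          field_simp
    _ ≤ y * ((2:ℝ) ^ (A+5))⁻¹ := by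
          apply mul_le_mul_of_nonneg_right this (by positivity)
    _ = ((2:ℝ) ^ (A+5))⁻¹ * y := by ring
  have hhigh : L (x + y) - L y ≤ ((2 : ℝ) ^ (A + 4))⁻¹ := by
    rw [hLd]
    have hlog2 : (1 : ℝ) / 2 ≤ Real.log 2 := by
      have := Real.log_two_gt_d9
      linarith
    have hlog : Real.log (((x : ℝ) + y) / y) ≤ (x : ℝ) / y := by
      have h1 : Real.log (((x : ℝ) + y) / y) ≤ ((x : ℝ) + y) / y - 1 :=
        Real.log_le_sub_one_of_pos (by positivity)
      have h2 : ((x : ℝ) + y) / y - 1 = (x : ℝ) / y := by field_simp; ring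
      linarith
    rw [Real.logb, div_le_iff₀ (by positivity : (0:ℝ) < Real.log 2)]
    have hfin : (x : ℝ) / y ≤ ((2 : ℝ) ^ (A + 4))⁻¹ * (1 / 2) := by
      have : ((2:ℝ) ^ (A + 5))⁻¹ = ((2:ℝ) ^ (A + 4))⁻¹ * (1/2) := by
        rw [pow_succ]
        rw [mul_inv]
        norm_num
      rw [← this]; exact hxy_div
    calc Real.log (((x : ℝ) + y) / y) ≤ (x : ℝ) / y := hlog
    _ ≤ ((2 : ℝ) ^ (A + 4))⁻¹ * (1 / 2) := hfin
    _ ≤ ((2 : ℝ) ^ (A + 4))⁻¹ * Real.log 2 := by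
        apply mul_le_mul_of_nonneg_left hlog2 (by positivity)
  -- conclude x + y ∈ G
  refine ⟨by omega, m, ?_⟩
  rw [hval]
  have htri : |L (x + y) - m| ≤ |L y - m| + (L (x + y) - L y) := by
    have : L (x + y) - m = (L y - m) + (L (x + y) - L y) := by ring
    rw [this]
    calc |(L y - m) + (L (x + y) - L y)| ≤ |L y - m| + |L (x + y) - L y| := abs_add_le _ _
    _ = |L y - m| + (L (x + y) - L y) := by rw [abs_of_nonneg hlow]
  have hsum : ((2:ℝ) ^ (A + 3))⁻¹ + ((2:ℝ) ^ (A + 4))⁻¹ ≤ ((2:ℝ) ^ A)⁻¹ := by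
    rw [pow_add, pow_add, mul_inv, mul_inv]
    have h1 : (0:ℝ) < ((2:ℝ) ^ A)⁻¹ := by positivity
    have e3 : ((2:ℝ) ^ 3)⁻¹ = 1/8 := by norm_num
    have e4 : ((2:ℝ) ^ 4)⁻¹ = 1/16 := by norm_num
    rw [e3, e4]
    nlinarith
  calc |L (x + y) - m| ≤ |L y - m| + (L (x + y) - L y) := htri
  _ ≤ ((2:ℝ) ^ (A + 3))⁻¹ + ((2:ℝ) ^ (A + 4))⁻¹ := add_le_add hm hhigh
  _ ≤ ((2:ℝ) ^ A)⁻¹ := hsum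

lemma G_not_mem (hnp : ∀ n : ℕ, p ≠ pure n) (hadd : p + p = p) (hmul : p * p = p) :
    G ∉ p := by
  haveI : Fact (Nat.Prime 2) := ⟨Nat.prime_two⟩
  intro hG
  rw [← hmul, mem_mul_iff] at hG
  have hX2 : {x : ℕ | ∃ k : ℕ, x = 2 ^ k}ᶜ ∈ p :=
    (Ultrafilter.compl_mem_iff_notMem).mpr (pow_two_not_mem hnp hadd)
  have hX3 : {x : ℕ | 1 ≤ x ∧ ∃ m : ℤ, |L x - m| ≤ 1/8} ∈ p :=
    log_near_int_mem hnp hmul (by norm_num)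
  obtain ⟨x, hxT, hxP, hx1, m, hm⟩ := pick3 (p := p) hG hX2 hX3
  simp only [Set.mem_setOf_eq, Set.mem_compl_iff] at hxT hxP
  -- h := |L x - m| is positive and ≤ 1/8
  set h : ℝ := |L x - m| with hh
  have hpos : 0 < h := by
    rcases eq_or_lt_of_le (abs_nonneg (L x - m)) with he | hlt
    · exfalso
      have : L x = m := by
        have := (abs_eq_zero).mp he.symm
        linarith
      exact hxP (eq_pow_of_L_eq_int hx1 this)
    · exact hlt
  have h18 : h ≤ 1/8 := hm
  -- choose K with (2^K)⁻¹ < h/2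
  obtain ⟨K, hK⟩ := exists_pow_lt_of_lt_one (by positivity : (0:ℝ) < h/2)
    (by norm_num : (1:ℝ)/2 < 1)
  have hK' : ((2:ℝ) ^ K)⁻¹ < h / 2 := by
    have : ((2:ℝ) ^ K)⁻¹ = (1/2 : ℝ) ^ K := by
      rw [div_pow, one_pow, one_div]
    rw [this]
    exact hK
  -- choose y
  have hY1 : {y : ℕ | 2 ^ K ∣ y} ∈ p := pow_two_dvd_mem hadd K
  have hY2 : {y : ℕ | 1 ≤ y ∧ ∃ m₂ : ℤ, |L y - m₂| ≤ h/4} ∈ p :=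
    log_near_int_mem hnp hmul (by positivity)
  obtain ⟨y, hy1, ⟨hy0, m₂, hm₂⟩, hyG⟩ := pick3 (p := p) hY1 hY2 hxT
  simp only [Set.mem_setOf_eq] at hy1 hyG
  obtain ⟨hxy2, m', hm'⟩ := hyG
  -- upper bound on |L (x*y) - m'|
  have hxyne : x * y ≠ 0 := by positivity
  have hvK : K ≤ padicValNat 2 (x * y) :=
    (padicValNat_dvd_iff_le hxyne).mp (dvd_trans hy1 (Dvd.intro_left x rfl))
  have hup : |L (x * y) - m'| < h / 2 := by
    calc |L (x * y) - m'| ≤ ((2:ℝ) ^ padicValNat 2 (x * y))⁻¹ := hm'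
    _ ≤ ((2:ℝ) ^ K)⁻¹ := by
        apply inv_anti₀ (by positivity)
        exact pow_le_pow_right₀ (by norm_num) hvK
    _ < h / 2 := hK'
  -- lower bound
  have hLxy : L (x * y) = L x + L y := L_mul hx1 hy0
  set d : ℝ := L x - m with hd
  set e : ℝ := L y - m₂ with he
  have habs_d : |d| = h := rfl
  have habs_e : |e| ≤ h/4 := hm₂
  have hsplit : L (x * y) - m' = d + e + ((m + m₂ - m' : ℤ) : ℝ) := by
    rw [hLxy]
    push_cast
    ring
  have hlow : h / 2 ≤ |L (x * y) - m'| := by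
    rw [hsplit]
    rcases eq_or_ne (m + m₂ - m') 0 with hw | hw
    · rw [hw]
      simp only [Int.cast_zero, add_zero]
      have h1 : |d| ≤ |d + e| + |e| := by
        have h2 := abs_add_le (d + e) (-e)
        simp only [add_neg_cancel_right, abs_neg] at h2
        exact h2
      have hd2 : |d| = h := habs_d
      have : h - h/4 ≤ |d + e| := by linarith
      linarith
    · have h1 : (1:ℝ) ≤ |((m + m₂ - m' : ℤ) : ℝ)| := by
        rw [← Int.cast_abs]
        exact_mod_cast Int.one_le_abs hw
      have h2 : |((m + m₂ - m' : ℤ) : ℝ)| ≤ |d + e + ((m + m₂ - m' : ℤ) : ℝ)| + |d + e| := by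
        have h3 := abs_add_le (d + e + ((m + m₂ - m' : ℤ) : ℝ)) (-(d + e))
        simp only [abs_neg] at h3
        calc |((m + m₂ - m' : ℤ) : ℝ)| = |d + e + ((m + m₂ - m' : ℤ) : ℝ) + -(d + e)| := by
              congr 1; ring
        _ ≤ _ := h3
      have h4 : |d + e| ≤ h + h/4 := by
        calc |d + e| ≤ |d| + |e| := abs_add_le _ _
        _ ≤ h + h/4 := by rw [habs_d]; linarith
      linarith
  linarith

end main

end NCI

/-- The algebra `(ℕ*, +, ·)` has no common idempotents. -/
theorem stmt_10 :
    ¬ ∃ u : Ultrafilter ℕ, (∀ n : ℕ, u ≠ pure n) ∧ u + u = u ∧ u * u = u := by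
  rintro ⟨u, hnp, hadd, hmul⟩
  exact NCI.G_not_mem hnp hadd hmul (NCI.G_mem hnp hadd hmul)
end

section
/- No closed subalgebra of (ℕ*, +, ·) satisfies the left distributivity law: there is no nonempty subset A of ℕ*, closed in the space of ultrafilters on ℕ, which is closed under + and under ·, and such that u·(v+w) = u·v + u·w for all u, v, w ∈ A. -/
attribute [local instance] Ultrafilter.mul Ultrafilter.add
attribute [local instance] Ultrafilter.semigroup Ultrafilter.addSemigroup

open Filter

/-- Pure arithmetic: a "leading binary window" function satisfying the
consistency and multiplicative-square relations must be constantly `10⋯0`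
or constantly `1⋯1`. -/
lemma window_dichotomy (A : ℕ → ℕ)
    (R1 : ∀ K, 1 ≤ K → 2 ^ (K - 1) ≤ A K ∧ A K < 2 ^ K)
    (R2 : ∀ K, 1 ≤ K → A (K + 1) = 2 * A K ∨ A (K + 1) = 2 * A K + 1)
    (R3 : ∀ K, 3 ≤ K → ∃ κ, K + 1 ≤ κ ∧ κ ≤ K + 3 ∧
      A K * 2 ^ κ < (A (K + 1) + 1) * (A (K + 1) + 1) ∧
      A (K + 1) * A (K + 1) < (A K + 1) * 2 ^ κ) :
    (∀ K, 1 ≤ K → A K = 2 ^ (K - 1)) ∨ (∀ K, 1 ≤ K → A K = 2 ^ K - 1) := by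
  by_contra h
  push_neg at h
  obtain ⟨⟨Kp, hKp1, hKp2⟩, ⟨Kq, hKq1, hKq2⟩⟩ := h
  have M1 : ∀ d : ℕ, 2 ^ (Kp + d - 1) + 2 ^ d ≤ A (Kp + d) := by
    intro d
    induction d with
    | zero =>
      have h1 := (R1 Kp hKp1).1
      simpa using by omega
    | succ d ih =>
      have h2 := R2 (Kp + d) (by omega)
      simp only [← Nat.add_assoc]
      have he : Kp + d + 1 - 1 = (Kp + d - 1) + 1 := by omega
      have hp1 : (2:ℕ) ^ ((Kp + d - 1) + 1) = 2 * 2 ^ (Kp + d - 1) := by ring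
      have hp2 : (2:ℕ) ^ (d + 1) = 2 * 2 ^ d := by ring
      rw [he, hp1, hp2]
      omega
  have M2 : ∀ d : ℕ, A (Kq + d) + 2 ^ d + 1 ≤ 2 ^ (Kq + d) := by
    intro d
    induction d with
    | zero =>
      have h1 := (R1 Kq hKq1).2
      simpa using by omega
    | succ d ih =>
      have h2 := R2 (Kq + d) (by omega)
      simp only [← Nat.add_assoc]
      have hp1 : (2:ℕ) ^ (Kq + d + 1) = 2 * 2 ^ (Kq + d) := by ring
      have hp2 : (2:ℕ) ^ (d + 1) = 2 * 2 ^ d := by ring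
      rw [hp1, hp2]
      omega
  set K := max (max Kp Kq) 3 + 1 with hK
  have hK3 : 3 ≤ K := by omega
  have hKpK : Kp ≤ K := by omega
  have hKqK : Kq + 1 ≤ K := by omega
  obtain ⟨κ, hκ1, hκ2, I1, I2⟩ := R3 K hK3
  have hM1K : 2 ^ (K - 1) + 2 ^ (K - Kp) ≤ A K := by
    have := M1 (K - Kp)
    have he : Kp + (K - Kp) = K := by omega
    rw [he] at this
    omega
  have hM2K : A K + 2 ^ (K - Kq) + 1 ≤ 2 ^ K := by
    have := M2 (K - Kq)
    have he : Kq + (K - Kq) = K := by omega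
    rw [he] at this
    omega
  have hR2K := R2 K (by omega)
  set B := A (K + 1) with hB
  have hBl : 2 * A K ≤ B := by omega
  have hBu : B ≤ 2 * A K + 1 := by omega
  -- convenient power facts
  have e1 : (2:ℕ) ^ K = 2 * 2 ^ (K - 1) := by
    have hh : K - 1 + 1 = K := by omega
    conv_lhs => rw [← hh]
    rw [pow_succ']
  have e2 : (2:ℕ) ^ (K - Kp) * 2 ^ (K - 1) * 2 = 2 ^ (K - Kp) * 2 ^ K := by
    rw [e1]; ring
  have e3 : (2:ℕ) ^ (K - Kq) * 2 ^ Kq = 2 ^ K := by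
    rw [← pow_add]
    congr 1
    omega
  have hQp : (1:ℕ) ≤ 2 ^ (K - Kp) := Nat.one_le_two_pow
  rcases Nat.lt_or_ge κ (K + 2) with hc | hc
  · -- κ = K + 1 : use I2
    have hκ : κ = K + 1 := by omega
    rw [hκ] at I2
    -- key : 2 * A K * A K ≥ (A K + 1) * 2 ^ K
    have key : (A K + 1) * 2 ^ K ≤ 2 * A K * A K := by
      have s1 : (2 ^ K + 2 * 2 ^ (K - Kp)) * A K ≤ 2 * A K * A K := by
        have : 2 ^ K + 2 * 2 ^ (K - Kp) ≤ 2 * A K := by omega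
        exact Nat.mul_le_mul_right _ this
      have s2 : 2 ^ (K - Kp) * 2 ^ (K - 1) * 2 ≤ 2 * 2 ^ (K - Kp) * A K := by
        have h5 : 2 ^ (K - 1) ≤ A K := by omega
        calc 2 ^ (K - Kp) * 2 ^ (K - 1) * 2 = 2 * 2 ^ (K - Kp) * 2 ^ (K - 1) := by ring
        _ ≤ 2 * 2 ^ (K - Kp) * A K := Nat.mul_le_mul_left _ h5
      have s3 : (2:ℕ) ^ K ≤ 2 ^ (K - Kp) * 2 ^ K := by
        calc (2:ℕ) ^ K = 1 * 2 ^ K := by ring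
        _ ≤ 2 ^ (K - Kp) * 2 ^ K := Nat.mul_le_mul_right _ hQp
      calc (A K + 1) * 2 ^ K = 2 ^ K * A K + 2 ^ K := by ring
      _ ≤ 2 ^ K * A K + 2 ^ (K - Kp) * 2 ^ K := by omega
      _ = 2 ^ K * A K + 2 ^ (K - Kp) * 2 ^ (K - 1) * 2 := by rw [e2]
      _ ≤ 2 ^ K * A K + 2 * 2 ^ (K - Kp) * A K := by omega
      _ = (2 ^ K + 2 * 2 ^ (K - Kp)) * A K := by ring
      _ ≤ 2 * A K * A K := s1
    -- B * B ≥ 4 A K ^2 ≥ 2 * ((A K + 1) * 2^K) = (A K + 1) * 2^(K+1)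
    have hBB : (A K + 1) * 2 ^ (K + 1) ≤ B * B := by
      calc (A K + 1) * 2 ^ (K + 1) = 2 * ((A K + 1) * 2 ^ K) := by ring
      _ ≤ 2 * (2 * A K * A K) := by omega
      _ = (2 * A K) * (2 * A K) := by ring
      _ ≤ B * B := Nat.mul_le_mul hBl hBl
    omega
  · -- κ ≥ K + 2 : use I1
    have hstar : A K * 2 ^ K < (A K + 1) * (A K + 1) := by
      have h4 : A K * (2 ^ K * 4) ≤ A K * 2 ^ κ := by
        apply Nat.mul_le_mul_left
        calc (2:ℕ) ^ K * 4 = 2 ^ (K + 2) := by ring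
        _ ≤ 2 ^ κ := Nat.pow_le_pow_right (by norm_num) hc
      have h5 : (B + 1) * (B + 1) ≤ (2 * A K + 2) * (2 * A K + 2) :=
        Nat.mul_le_mul (by omega) (by omega)
      have h6 : A K * (2 ^ K * 4) < (2 * A K + 2) * (2 * A K + 2) := by
        calc A K * (2 ^ K * 4) ≤ A K * 2 ^ κ := h4
        _ < (B + 1) * (B + 1) := I1
        _ ≤ (2 * A K + 2) * (2 * A K + 2) := h5
      nlinarith
    have h7 : (A K + 1) * (A K + 1) ≤ (A K + 1) * 2 ^ K - (A K + 1) * 2 ^ (K - Kq) := by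
      have h8 : A K + 1 ≤ 2 ^ K - 2 ^ (K - Kq) := by omega
      have h9 : (A K + 1) * (A K + 1) ≤ (A K + 1) * (2 ^ K - 2 ^ (K - Kq)) :=
        Nat.mul_le_mul_left _ h8
      rwa [Nat.mul_sub] at h9
    have h10 : (A K + 1) * 2 ^ (K - Kq) < 2 ^ K := by
      have h11 : (A K + 1) * 2 ^ (K - Kq) ≤ (A K + 1) * 2 ^ K - A K * 2 ^ K - 1 := by omega
      have h12 : (A K + 1) * 2 ^ K - A K * 2 ^ K = 2 ^ K := by
        have : (A K + 1) * 2 ^ K = A K * 2 ^ K + 2 ^ K := by ring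
        omega
      omega
    have h13 : A K + 1 < 2 ^ Kq := by
      rw [← e3] at h10
      have := Nat.lt_of_mul_lt_mul_left (a := 2 ^ (K - Kq)) (by
        calc 2 ^ (K - Kq) * (A K + 1) = (A K + 1) * 2 ^ (K - Kq) := by ring
        _ < 2 ^ (K - Kq) * 2 ^ Kq := h10)
      exact this
    have h14 : (2:ℕ) ^ Kq ≤ 2 ^ (K - 1) := Nat.pow_le_pow_right (by norm_num) (by omega)
    omega


-- size basics
lemma sz_ubX (n : ℕ) : n < 2 ^ n.size := Nat.size_le.mp le_rfl

lemma sz_posX {n : ℕ} (h : 0 < n) : 0 < n.size := by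
  rcases Nat.eq_zero_or_pos n.size with h0 | h1
  · exact absurd (Nat.size_eq_zero.mp h0) (by omega)
  · exact h1

lemma sz_lbX {n : ℕ} (h : 0 < n) : 2 ^ (n.size - 1) ≤ n := by
  have h1 : n.size - 1 < n.size := by have := sz_posX h; omega
  exact Nat.lt_size.mp h1

lemma sz_geX {n K : ℕ} (h : 2 ^ K ≤ n) : K + 1 ≤ n.size := Nat.lt_size.mpr h

lemma div_boundsX {n d w : ℕ} (hd : 0 < d) (h : n / d = w) :
    w * d ≤ n ∧ n < (w + 1) * d := by
  constructor
  · rw [← h]; exact Nat.div_mul_le_self n d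
  · have : n / d < w + 1 := by omega
    exact (Nat.div_lt_iff_lt_mul hd).mp this

-- bounds for the leading window
lemma window_mem {n K : ℕ} (hn : 0 < n) (h1 : 1 ≤ K) (h2 : K ≤ n.size) :
    2 ^ (K - 1) ≤ n / 2 ^ (n.size - K) ∧ n / 2 ^ (n.size - K) < 2 ^ K := by
  have hd : (0:ℕ) < 2 ^ (n.size - K) := Nat.pow_pos (by norm_num)
  constructor
  · rw [Nat.le_div_iff_mul_le hd]
    calc 2 ^ (K - 1) * 2 ^ (n.size - K) = 2 ^ (K - 1 + (n.size - K)) := by rw [pow_add]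
    _ = 2 ^ (n.size - 1) := by congr 1; omega
    _ ≤ n := sz_lbX hn
  · rw [Nat.div_lt_iff_lt_mul hd]
    calc n < 2 ^ n.size := sz_ubX n
    _ = 2 ^ K * 2 ^ (n.size - K) := by rw [← pow_add]; congr 1; omega

section UF
variable {z : Ultrafilter ℕ}

lemma evLargeX (hnp : ∀ n : ℕ, z ≠ pure n) (N : ℕ) : ∀ᶠ n in ↑z, N ≤ n := by
  have h1 : {n : ℕ | n < N} ∉ z := by
    intro h
    obtain ⟨x, -, hx⟩ := Ultrafilter.eq_pure_of_finite_mem (Set.finite_lt_nat N) h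
    exact hnp x hx
  have h2 : {n : ℕ | n < N}ᶜ ∈ z := Ultrafilter.compl_mem_iff_notMem.mpr h1
  apply Filter.mem_of_superset h2
  intro n hn
  simpa using hn

lemma evValX (f : ℕ → ℕ) (m : ℕ) (h : ∀ᶠ n in ↑z, f n < m) :
    ∃ r, r < m ∧ ∀ᶠ n in ↑z, f n = r := by
  have hm : {k : ℕ | k < m} ∈ Ultrafilter.map f z := by
    rw [Ultrafilter.mem_map]; exact h
  obtain ⟨r, hr, he⟩ := Ultrafilter.eq_pure_of_finite_mem (Set.finite_lt_nat m) hm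
  refine ⟨r, hr, ?_⟩
  have : {r} ∈ Ultrafilter.map f z := by rw [he]; exact Ultrafilter.mem_pure.mpr rfl
  rw [Ultrafilter.mem_map] at this
  apply Filter.mem_of_superset this
  intro n hn
  simpa using hn

/-- existence of the leading-window value -/
lemma evWindow (hnp : ∀ n : ℕ, z ≠ pure n) (K : ℕ) (hK : 1 ≤ K) :
    ∃ r, 2 ^ (K - 1) ≤ r ∧ r < 2 ^ K ∧ ∀ᶠ n in ↑z, n / 2 ^ (n.size - K) = r := by
  have hbig : ∀ᶠ n in ↑z, 2 ^ K ≤ n := evLargeX hnp _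
  have hb : ∀ᶠ n in ↑z, n / 2 ^ (n.size - K) < 2 ^ K := by
    filter_upwards [hbig] with n hn
    have hn0 : 0 < n := lt_of_lt_of_le (Nat.pow_pos (by norm_num)) hn
    exact (window_mem hn0 hK (by have := sz_geX hn; omega)).2
  obtain ⟨r, hr, he⟩ := evValX _ _ hb
  obtain ⟨n, hn1, hn2⟩ := (hbig.and he).exists
  have hn0 : 0 < n := lt_of_lt_of_le (Nat.pow_pos (by norm_num)) hn1
  have := (window_mem hn0 hK (by have := sz_geX hn1; omega)).1
  exact ⟨r, by omega, hr, he⟩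

/-- consistency of consecutive windows -/
lemma evWindowSucc (hnp : ∀ n : ℕ, z ≠ pure n) {K a b : ℕ} (hK : 1 ≤ K)
    (ha : ∀ᶠ n in ↑z, n / 2 ^ (n.size - K) = a)
    (hb : ∀ᶠ n in ↑z, n / 2 ^ (n.size - (K + 1)) = b) :
    b = 2 * a ∨ b = 2 * a + 1 := by
  have hbig : ∀ᶠ n in ↑z, 2 ^ (K + 1) ≤ n := evLargeX hnp _
  obtain ⟨n, hn1, hn2, hn3⟩ := (hbig.and (ha.and hb)).exists
  have hsz : K + 2 ≤ n.size := by have := sz_geX hn1; omega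
  have key : n / 2 ^ (n.size - K) = n / 2 ^ (n.size - (K + 1)) / 2 := by
    rw [Nat.div_div_eq_div_mul]
    rw [show n.size - K = (n.size - (K + 1)) + 1 from by omega, pow_succ]
  rw [hn2, hn3] at key
  have h2 := Nat.div_add_mod b 2
  have h3 : b % 2 < 2 := Nat.mod_lt _ (by norm_num)
  omega

/-- the multiplicative window relation -/
lemma evWindowMul (hnp : ∀ n : ℕ, z ≠ pure n) (hmul : z * z = z) {K a u : ℕ} (hK : 3 ≤ K)
    (ha : ∀ᶠ n in ↑z, n / 2 ^ (n.size - K) = a)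
    (hu : ∀ᶠ n in ↑z, n / 2 ^ (n.size - (K + 1)) = u)
    (hu1 : 2 ^ K ≤ u) (hu2 : u < 2 ^ (K + 1)) :
    ∃ κ, K + 1 ≤ κ ∧ κ ≤ K + 3 ∧
      a * 2 ^ κ < (u + 1) * (u + 1) ∧ u * u < (a + 1) * 2 ^ κ := by
  have hmulK : ∀ᶠ x in ↑z, ∀ᶠ y in ↑z, (x * y) / 2 ^ ((x * y).size - K) = a :=
    (Ultrafilter.eventually_mul z z (fun n => n / 2 ^ (n.size - K) = a)).mp
      (by rw [hmul]; exact ha)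
  have hbig : ∀ᶠ n in ↑z, 2 ^ (K + 1) ≤ n := evLargeX hnp _
  obtain ⟨x, hx1, hx2, hx3⟩ := (hu.and (hbig.and hmulK)).exists
  obtain ⟨y, hy1, hy2, hy3⟩ := (hu.and (hbig.and hx3)).exists
  -- arithmetic
  have hx0 : 0 < x := lt_of_lt_of_le (Nat.pow_pos (by norm_num)) hx2
  have hy0 : 0 < y := lt_of_lt_of_le (Nat.pow_pos (by norm_num)) hy2
  have hsx : K + 2 ≤ x.size := by have := sz_geX hx2; omega
  have hsy : K + 2 ≤ y.size := by have := sz_geX hy2; omega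
  set s := x.size - (K + 1) with hs
  set t := y.size - (K + 1) with ht
  have hps : (0:ℕ) < 2 ^ s := Nat.pow_pos (by norm_num)
  have hpt : (0:ℕ) < 2 ^ t := Nat.pow_pos (by norm_num)
  obtain ⟨hxl, hxu⟩ := div_boundsX hps hx1
  obtain ⟨hyl, hyu⟩ := div_boundsX hpt hy1
  have hxyl : u * u * 2 ^ (s + t) ≤ x * y := by
    calc u * u * 2 ^ (s + t) = (u * 2 ^ s) * (u * 2 ^ t) := by rw [pow_add]; ring
    _ ≤ x * y := Nat.mul_le_mul hxl hyl
  have hxyu : x * y < (u + 1) * (u + 1) * 2 ^ (s + t) := by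
    calc x * y < ((u + 1) * 2 ^ s) * ((u + 1) * 2 ^ t) :=
      Nat.mul_lt_mul_of_lt_of_lt hxu hyu
    _ = (u + 1) * (u + 1) * 2 ^ (s + t) := by rw [pow_add]; ring
  set Λ := (x * y).size with hΛ
  have hxy0 : 0 < x * y := Nat.mul_pos hx0 hy0
  -- window bound for the product
  have hΛK : K ≤ Λ := by
    have : 2 ^ (K + 1) ≤ x * y := le_trans hx2 (Nat.le_mul_of_pos_right _ hy0)
    have := sz_geX this
    omega
  have hpΛ : (0:ℕ) < 2 ^ (Λ - K) := Nat.pow_pos (by norm_num)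
  obtain ⟨hal, hau⟩ := div_boundsX hpΛ hy3
  -- size of u^2
  set k2 := (u * u).size with hk2
  have hk2l : 2 * K + 1 ≤ k2 := by
    apply sz_geX
    calc (2:ℕ) ^ (2 * K) = 2 ^ K * 2 ^ K := by rw [← pow_add]; congr 1; omega
    _ ≤ u * u := Nat.mul_le_mul hu1 hu1
  have hk2u : k2 ≤ 2 * K + 2 := by
    apply Nat.size_le.mpr
    calc u * u < 2 ^ (K + 1) * 2 ^ (K + 1) := Nat.mul_lt_mul_of_lt_of_lt hu2 hu2
    _ = 2 ^ (2 * K + 2) := by rw [← pow_add]; congr 1; omega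
  have hu0 : 0 < u := lt_of_lt_of_le (Nat.pow_pos (by norm_num)) hu1
  have hu2l : 2 ^ (k2 - 1) ≤ u * u := sz_lbX (Nat.mul_pos hu0 hu0)
  have hu2u : u * u < 2 ^ k2 := sz_ubX _
  -- Λ bounds
  have hΛl : k2 + s + t ≤ Λ := by
    have h1 : 2 ^ (k2 - 1 + (s + t)) ≤ x * y := by
      calc 2 ^ (k2 - 1 + (s + t)) = 2 ^ (k2 - 1) * 2 ^ (s + t) := by rw [pow_add]
      _ ≤ u * u * 2 ^ (s + t) := Nat.mul_le_mul_right _ hu2l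
      _ ≤ x * y := hxyl
    have := sz_geX h1
    omega
  have hΛu : Λ ≤ k2 + s + t + 1 := by
    apply Nat.size_le.mpr
    have hu8 : 8 ≤ u := by
      have h8 : (8:ℕ) ≤ 2 ^ K :=
        le_trans (by norm_num : (8:ℕ) ≤ 2 ^ 3) (Nat.pow_le_pow_right (by norm_num) hK)
      omega
    have hsq : (u + 1) * (u + 1) ≤ 2 * (u * u) := by nlinarith
    calc x * y < (u + 1) * (u + 1) * 2 ^ (s + t) := hxyu
    _ ≤ 2 * (u * u) * 2 ^ (s + t) := Nat.mul_le_mul_right _ hsq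
    _ < 2 * 2 ^ k2 * 2 ^ (s + t) := by
        have h2 : (0:ℕ) < 2 ^ (s + t) := Nat.pow_pos (by norm_num)
        exact mul_lt_mul_of_pos_right (by omega) h2
    _ = 2 ^ (k2 + s + t + 1) := by rw [pow_add, pow_add]; ring
  refine ⟨Λ - K - (s + t), by omega, by omega, ?_, ?_⟩
  · -- a * 2^κ < (u+1)^2
    have h1 : a * 2 ^ (Λ - K) < (u + 1) * (u + 1) * 2 ^ (s + t) := lt_of_le_of_lt hal hxyu
    have h3 : a * 2 ^ (Λ - K) = (a * 2 ^ (Λ - K - (s + t))) * 2 ^ (s + t) := by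
      rw [mul_assoc, ← pow_add]
      congr 2
      omega
    rw [h3] at h1
    exact Nat.lt_of_mul_lt_mul_right h1
  · -- u^2 < (a+1) * 2^κ
    have h1 : u * u * 2 ^ (s + t) < (a + 1) * 2 ^ (Λ - K) := lt_of_le_of_lt hxyl hau
    have h3 : (a + 1) * 2 ^ (Λ - K) = ((a + 1) * 2 ^ (Λ - K - (s + t))) * 2 ^ (s + t) := by
      rw [mul_assoc, ← pow_add]
      congr 2
      omega
    rw [h3] at h1
    exact Nat.lt_of_mul_lt_mul_right h1

end UF


-- from core3 (assumed): sz_ub, sz_pos, sz_lb, sz_ge, div_bounds, window_mem, evLarge', evVal'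
lemma sz_ub' (n : ℕ) : n < 2 ^ n.size := Nat.size_le.mp le_rfl
lemma sz_pos' {n : ℕ} (h : 0 < n) : 0 < n.size := by
  rcases Nat.eq_zero_or_pos n.size with h0 | h1
  · exact absurd (Nat.size_eq_zero.mp h0) (by omega)
  · exact h1
lemma sz_lb' {n : ℕ} (h : 0 < n) : 2 ^ (n.size - 1) ≤ n := by
  have h1 : n.size - 1 < n.size := by have := sz_pos' h; omega
  exact Nat.lt_size.mp h1
lemma sz_ge' {n K : ℕ} (h : 2 ^ K ≤ n) : K + 1 ≤ n.size := Nat.lt_size.mpr h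

/-- if `d ∣ b`, `d ∣ M`, `b < M` then `b + d ≤ M` -/
lemma dvd_up {d b M : ℕ} (h1 : d ∣ b) (h2 : d ∣ M) (h3 : b < M) : b + d ≤ M := by
  have h4 : d ∣ M - b := Nat.dvd_sub h2 h1
  have h5 : 0 < M - b := by omega
  have := Nat.le_of_dvd h5 h4
  omega

lemma div_bounds' {n d w : ℕ} (hd : 0 < d) (h : n / d = w) :
    w * d ≤ n ∧ n < (w + 1) * d := by
  constructor
  · rw [← h]; exact Nat.div_mul_le_self n d
  · have : n / d < w + 1 := by omega
    exact (Nat.div_lt_iff_lt_mul hd).mp this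

section UF
variable {z : Ultrafilter ℕ}

lemma evLarge'' (hnp : ∀ n : ℕ, z ≠ pure n) (N : ℕ) : ∀ᶠ n in ↑z, N ≤ n := by
  have h1 : {n : ℕ | n < N} ∉ z := by
    intro h
    obtain ⟨x, -, hx⟩ := Ultrafilter.eq_pure_of_finite_mem (Set.finite_lt_nat N) h
    exact hnp x hx
  have h2 : {n : ℕ | n < N}ᶜ ∈ z := Ultrafilter.compl_mem_iff_notMem.mpr h1
  apply Filter.mem_of_superset h2
  intro n hn
  simpa using hn

lemma evAdd' (hadd : z + z = z) (P : ℕ → Prop) :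
    (∀ᶠ n in ↑z, P n) ↔ (∀ᶠ a in ↑z, ∀ᶠ b in ↑z, P (a + b)) := by
  conv_lhs => rw [← hadd]
  exact Ultrafilter.eventually_add z z P

lemma evMul' (hmul : z * z = z) (P : ℕ → Prop) :
    (∀ᶠ n in ↑z, P n) ↔ (∀ᶠ a in ↑z, ∀ᶠ b in ↑z, P (a * b)) := by
  conv_lhs => rw [← hmul]
  exact Ultrafilter.eventually_mul z z P

lemma evDvd' (hnp : ∀ n : ℕ, z ≠ pure n) (hadd : z + z = z) (K : ℕ) :
    ∀ᶠ n in ↑z, 2 ^ K ∣ n := by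
  have hKpos : 0 < 2 ^ K := Nat.pow_pos (n := K) (by norm_num)
  have hb : ∀ᶠ n in (↑z : Filter ℕ), (fun n => n % 2 ^ K) n < 2 ^ K :=
    Filter.Eventually.of_forall fun n => Nat.mod_lt _ hKpos
  obtain ⟨r, hr, he⟩ :=
    (by
      have hm : {k : ℕ | k < 2 ^ K} ∈ Ultrafilter.map (fun n => n % 2 ^ K) z := by
        rw [Ultrafilter.mem_map]; exact hb
      obtain ⟨r, hr, hp⟩ := Ultrafilter.eq_pure_of_finite_mem (Set.finite_lt_nat (2 ^ K)) hm
      refine ⟨r, hr, ?_⟩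
      have : {r} ∈ Ultrafilter.map (fun n => n % 2 ^ K) z := by
        rw [hp]; exact Ultrafilter.mem_pure.mpr rfl
      rw [Ultrafilter.mem_map] at this
      apply Filter.mem_of_superset this
      intro n hn
      simpa using hn :
      ∃ r, r < 2 ^ K ∧ ∀ᶠ n in ↑z, n % 2 ^ K = r)
  have h2 : ∀ᶠ a in ↑z, ∀ᶠ b in ↑z, (a + b) % 2 ^ K = r := (evAdd' hadd _).mp he
  obtain ⟨a, ha1, ha2⟩ := (he.and h2).exists
  obtain ⟨b, hb1, hb2⟩ := (he.and ha2).exists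
  have hr0 : r = 0 := by
    have key : (r + r) % 2 ^ K = r := by
      have h3 := Nat.add_mod a b (2 ^ K)
      rw [ha1, hb1] at h3
      rw [← h3]
      exact hb2
    rcases Nat.lt_or_ge (r + r) (2 ^ K) with h | h
    · rw [Nat.mod_eq_of_lt h] at key; omega
    · have h3 : r + r - 2 ^ K < 2 ^ K := by omega
      rw [Nat.mod_eq_sub_mod h, Nat.mod_eq_of_lt h3] at key
      omega
  filter_upwards [he] with n hn
  exact Nat.dvd_of_mod_eq_zero (hr0 ▸ hn)

/-- non-powers of two are generic -/
lemma evNP (hnp : ∀ n : ℕ, z ≠ pure n) (hadd : z + z = z) :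
    ∀ᶠ n in ↑z, 0 < n ∧ n ≠ 2 ^ (n.size - 1) := by
  by_contra hcon
  have h1 : {n : ℕ | 0 < n ∧ n ≠ 2 ^ (n.size - 1)} ∉ z := hcon
  have h2 : {n : ℕ | 0 < n ∧ n ≠ 2 ^ (n.size - 1)}ᶜ ∈ z :=
    Ultrafilter.compl_mem_iff_notMem.mpr h1
  have h3 : ∀ᶠ n in ↑z, n = 0 ∨ n = 2 ^ (n.size - 1) := by
    apply Filter.mem_of_superset h2
    intro n hn
    simp only [Set.mem_compl_iff, Set.mem_setOf_eq, not_and_or, not_lt, Nat.le_zero] at hn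
    simpa using by tauto
  have h4 : ∀ᶠ n in ↑z, n = 2 ^ (n.size - 1) := by
    filter_upwards [h3, evLarge'' hnp 1] with n h5 h6
    omega
  have h5 : ∀ᶠ a in ↑z, ∀ᶠ b in ↑z, (a + b) = 2 ^ ((a + b).size - 1) :=
    (evAdd' hadd _).mp h4
  obtain ⟨a, ha1, ha2, ha3⟩ := ((evLarge'' hnp 1).and (h4.and h5)).exists
  set j := a.size - 1 with hj
  obtain ⟨b, hb1, hb2, hb3⟩ :=
    (((evDvd' hnp hadd (j + 1)).and ((evLarge'' hnp (2 ^ (j + 2))).and ha3))).exists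
  -- a = 2^j, 2^(j+1) ∣ b, b ≥ 2^(j+2), a+b = 2^m
  set m := (a + b).size - 1 with hm
  have hab : a + b = 2 ^ m := hb3
  have hmj : j + 1 ≤ m := by
    by_contra hcon2
    have : m ≤ j := by omega
    have h6 : (2:ℕ) ^ m ≤ 2 ^ j := Nat.pow_le_pow_right (by norm_num) this
    have h7 : a + b ≥ 2 ^ (j + 2) := by omega
    have h8 : (2:ℕ) ^ j < 2 ^ (j + 2) := Nat.pow_lt_pow_right (by norm_num) (by omega)
    omega
  have hd1 : 2 ^ (j + 1) ∣ a + b := by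
    rw [hab]
    exact pow_dvd_pow 2 hmj
  have hd2 : 2 ^ (j + 1) ∣ a := (Nat.dvd_add_right hb1).mp (by rwa [Nat.add_comm a b] at hd1)
  rw [ha2] at hd2
  have := Nat.le_of_dvd (Nat.pow_pos (by norm_num)) hd2
  have : (2:ℕ) ^ j < 2 ^ (j + 1) := Nat.pow_lt_pow_right (by norm_num) (by omega)
  omega

/-- In the `10⋯0` regime, the gap below the leading binary digit is generically large. -/
lemma evTopGap (hnp : ∀ n : ℕ, z ≠ pure n) (hadd : z + z = z)
    (hS : ∀ K, 1 ≤ K → ∀ᶠ n in ↑z, n / 2 ^ (n.size - K) = 2 ^ (K - 1)) (C : ℕ) :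
    ∀ᶠ n in ↑z, C ≤ n.size - (n - 2 ^ (n.size - 1)).size ∧
      0 < n - 2 ^ (n.size - 1) ∧ 0 < n := by
  filter_upwards [hS (C + 2) (by omega), evNP hnp hadd, evLarge'' hnp (2 ^ (C + 2))]
    with n h1 h2 h3
  have hn0 : 0 < n := h2.1
  have hsz : C + 3 ≤ n.size := by have := sz_ge' h3; omega
  have hd : (0:ℕ) < 2 ^ (n.size - (C + 2)) := Nat.pow_pos (by norm_num)
  obtain ⟨-, hup⟩ := div_bounds' hd h1
  have hup2 : n < 2 ^ (n.size - 1) + 2 ^ (n.size - (C + 2)) := by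
    have he : (2 ^ (C + 2 - 1) + 1) * 2 ^ (n.size - (C + 2))
        = 2 ^ (n.size - 1) + 2 ^ (n.size - (C + 2)) := by
      rw [Nat.add_mul, Nat.one_mul, ← pow_add]
      congr 2
      omega
    rw [he] at hup
    exact hup
  have hlow : 2 ^ (n.size - 1) ≤ n := sz_lb' hn0
  have hrpos : 0 < n - 2 ^ (n.size - 1) := by
    rcases Nat.lt_or_ge (2 ^ (n.size - 1)) n with h | h
    · omega
    · exfalso; exact h2.2 (by omega)
  have hrsz : (n - 2 ^ (n.size - 1)).size ≤ n.size - (C + 2) := by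
    apply Nat.size_le.mpr
    omega
  omega

/-- In the `10⋯0` regime, the set
`T = {n : the 2-adic valuation of n is less than the top gap}` is generic. -/
lemma evTplus (hnp : ∀ n : ℕ, z ≠ pure n) (hadd : z + z = z)
    (hS : ∀ K, 1 ≤ K → ∀ᶠ n in ↑z, n / 2 ^ (n.size - K) = 2 ^ (K - 1)) :
    ∀ᶠ n in ↑z, 0 < n ∧ 0 < n - 2 ^ (n.size - 1) ∧
      ¬ 2 ^ (n.size - (n - 2 ^ (n.size - 1)).size) ∣ n := by
  rw [evAdd' hadd]
  filter_upwards [evLarge'' hnp 1] with a ha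
  set k := padicValNat 2 a with hk
  have hk1 : 2 ^ k ∣ a := pow_padicValNat_dvd
  have hk2 : ¬ 2 ^ (k + 1) ∣ a := pow_succ_padicValNat_not_dvd (by omega)
  have hka : k < a.size := by
    have h1 : 2 ^ k ≤ a := Nat.le_of_dvd (by omega) hk1
    have := sz_ge' h1
    omega
  set sa := a.size with hsa
  filter_upwards [evTopGap hnp hadd hS (k + 1), evDvd' hnp hadd (sa + 1),
    evLarge'' hnp (2 ^ (sa + 2))] with b hb1 hb2 hb3
  obtain ⟨hLb, hrb, hb0⟩ := hb1
  set sb := b.size with hsb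
  have hsab : sa + 3 ≤ sb := by have := sz_ge' hb3; omega
  have hbub : b + 2 ^ (sa + 1) ≤ 2 ^ sb :=
    dvd_up hb2 (pow_dvd_pow 2 (by omega)) (sz_ub' b)
  have hblow : 2 ^ (sb - 1) ≤ b := sz_lb' hb0
  have haub : a < 2 ^ sa := sz_ub' a
  -- size (a+b) = sb
  have hszab : (a + b).size = sb := by
    have hu : (a + b).size ≤ sb := Nat.size_le.mpr (by omega)
    have hl : sb ≤ (a + b).size := by
      have : 2 ^ (sb - 1) ≤ a + b := by omega
      have := sz_ge' this
      omega
    omega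
  -- rr (a+b) = a + rr b
  have hrr : a + b - 2 ^ ((a + b).size - 1) = a + (b - 2 ^ (sb - 1)) := by
    rw [hszab]
    omega
  set rb := b - 2 ^ (sb - 1) with hrbdef
  have hrb_dvd : 2 ^ (sa + 1) ∣ rb := Nat.dvd_sub hb2 (pow_dvd_pow 2 (by omega))
  have hrb_ge : 2 ^ (sa + 1) ≤ rb := Nat.le_of_dvd hrb hrb_dvd
  have hrb_sz : sa + 2 ≤ rb.size := by have := sz_ge' hrb_ge; omega
  -- size (a + rb) = size rb
  have hszr : (a + rb).size = rb.size := by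
    have hu : (a + rb).size ≤ rb.size := by
      apply Nat.size_le.mpr
      have h4 : rb + 2 ^ (sa + 1) ≤ 2 ^ rb.size :=
        dvd_up hrb_dvd (pow_dvd_pow 2 (by omega)) (sz_ub' rb)
      omega
    have hl : rb.size ≤ (a + rb).size := Nat.size_le_size (by omega)
    omega
  refine ⟨by omega, by rw [hrr]; omega, ?_⟩
  -- non-divisibility
  rw [hrr, hszab, hszr]
  intro hdvd
  have hLL : k + 1 ≤ sb - rb.size := hLb
  have hd1 : 2 ^ (k + 1) ∣ a + b := dvd_trans (pow_dvd_pow 2 hLL) hdvd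
  have hd2 : 2 ^ (k + 1) ∣ b := dvd_trans (pow_dvd_pow 2 (by omega : k + 1 ≤ sa + 1)) hb2
  have hd3 : 2 ^ (k + 1) ∣ a := by
    have := Nat.dvd_sub hd1 hd2
    simpa using this
  exact hk2 hd3

/-- The `10⋯0` regime is impossible. -/
lemma kill_Splus (hnp : ∀ n : ℕ, z ≠ pure n) (hadd : z + z = z) (hmul : z * z = z)
    (hS : ∀ K, 1 ≤ K → ∀ᶠ n in ↑z, n / 2 ^ (n.size - K) = 2 ^ (K - 1)) : False := by
  have hT := (evMul' hmul _).mp (evTplus hnp hadd hS)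
  obtain ⟨x, hx1, hx2, hx3⟩ := ((evNP hnp hadd).and ((evLarge'' hnp 2).and hT)).exists
  have hx0 : 0 < x := hx1.1
  set m1 := x.size - 1 with hm1
  set r1 := x - 2 ^ m1 with hr1
  have hxsz : 1 ≤ x.size := sz_pos' hx0
  have hxlow : 2 ^ m1 ≤ x := sz_lb' hx0
  have hxup : x < 2 ^ (m1 + 1) := by
    have := sz_ub' x
    have he : m1 + 1 = x.size := by omega
    rwa [he]
  have hr1pos : 0 < r1 := by
    rcases Nat.lt_or_ge (2 ^ m1) x with h | h
    · omega
    · exfalso; exact hx1.2 (by omega)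
  have hr1up : r1 < 2 ^ m1 := by
    have h2 : (2:ℕ) ^ (m1 + 1) = 2 * 2 ^ m1 := by ring
    omega
  set Lx := x.size - r1.size with hLx
  set C := x.size + 3 with hC
  obtain ⟨y, hy1, hy2, hy3, hy4⟩ :=
    (hx3.and ((hS C (by omega)).and ((evDvd' hnp hadd (Lx + 2)).and
      (evLarge'' hnp (2 ^ C))))).exists
  -- y structure
  have hy0 : 0 < y := lt_of_lt_of_le (Nat.pow_pos (by norm_num)) hy4
  set sy := y.size with hsy
  have hsyC : C + 1 ≤ sy := by have := sz_ge' hy4; omega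
  set m2 := sy - 1 with hm2
  have hylow : 2 ^ m2 ≤ y := sz_lb' hy0
  set r2 := y - 2 ^ m2 with hr2
  set D := sy - C with hD
  have hr2up : r2 < 2 ^ D := by
    have hd : (0:ℕ) < 2 ^ (sy - C) := Nat.pow_pos (by norm_num)
    obtain ⟨-, hup⟩ := div_bounds' hd hy2
    have he : (2 ^ (C - 1) + 1) * 2 ^ (sy - C) = 2 ^ m2 + 2 ^ D := by
      rw [Nat.add_mul, Nat.one_mul, ← pow_add]
      congr 2
      omega
    rw [he] at hup
    omega
  -- key inequalities
  have hDm : m1 + D + 1 ≤ m2 - 1 := by omega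
  have hx_eq : x = 2 ^ m1 + r1 := by omega
  have hy_eq : y = 2 ^ m2 + r2 := by omega
  set S := 2 ^ m1 * r2 + r1 * y with hSdef
  have hprod : x * y = 2 ^ (m1 + m2) + S := by
    calc x * y = (2 ^ m1 + r1) * y := by rw [← hx_eq]
    _ = 2 ^ m1 * y + r1 * y := by ring
    _ = 2 ^ m1 * (2 ^ m2 + r2) + r1 * y := by rw [← hy_eq]
    _ = 2 ^ (m1 + m2) + (2 ^ m1 * r2 + r1 * y) := by rw [pow_add]; ring
  -- S < 2^(m1+m2)
  have hS1 : 2 ^ m1 * r2 ≤ 2 ^ (m1 + D) := by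
    calc 2 ^ m1 * r2 ≤ 2 ^ m1 * 2 ^ D := Nat.mul_le_mul_left _ (by omega)
    _ = 2 ^ (m1 + D) := by rw [pow_add]
  have hS2 : r1 * y ≤ 2 ^ (m1 + m2) - 2 ^ m2 + 2 ^ (m1 + D) := by
    have h1 : r1 * y ≤ r1 * 2 ^ m2 + r1 * 2 ^ D := by
      calc r1 * y = r1 * 2 ^ m2 + r1 * r2 := by rw [hy_eq]; ring
      _ ≤ r1 * 2 ^ m2 + r1 * 2 ^ D := by
          have := Nat.mul_le_mul_left r1 (le_of_lt hr2up)
          omega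
    have h2 : r1 * 2 ^ m2 ≤ 2 ^ (m1 + m2) - 2 ^ m2 := by
      have h3 : r1 * 2 ^ m2 ≤ (2 ^ m1 - 1) * 2 ^ m2 := Nat.mul_le_mul_right _ (by omega)
      have h4 : (2 ^ m1 - 1) * 2 ^ m2 = 2 ^ (m1 + m2) - 2 ^ m2 := by
        rw [Nat.sub_mul, Nat.one_mul, ← pow_add]
      omega
    have h5 : r1 * 2 ^ D ≤ 2 ^ m1 * 2 ^ D := Nat.mul_le_mul_right _ (by omega)
    have h6 : (2:ℕ) ^ m1 * 2 ^ D = 2 ^ (m1 + D) := by rw [pow_add]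
    omega
  have hSup : S < 2 ^ (m1 + m2) := by
    have h1 : (2:ℕ) ^ (m1 + D) ≤ 2 ^ (m2 - 2) := Nat.pow_le_pow_right (by norm_num) (by omega)
    have h2 : (2:ℕ) ^ (m2 - 1) + 2 ^ (m2 - 1) ≤ 2 ^ m2 := by
      have : (2:ℕ) ^ m2 = 2 * 2 ^ (m2 - 1) := by
        have he : m2 - 1 + 1 = m2 := by omega
        conv_lhs => rw [← he]
        rw [pow_succ']
      omega
    have h2b : (2:ℕ) ^ (m2 - 2) + 2 ^ (m2 - 2) ≤ 2 ^ (m2 - 1) := by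
      have : (2:ℕ) ^ (m2 - 1) = 2 * 2 ^ (m2 - 2) := by
        have he : m2 - 2 + 1 = m2 - 1 := by omega
        conv_lhs => rw [← he]
        rw [pow_succ']
      omega
    have h0 : (1:ℕ) ≤ 2 ^ (m2 - 1) := Nat.one_le_two_pow
    have h3 : (2:ℕ) ^ m2 ≤ 2 ^ (m1 + m2) := Nat.pow_le_pow_right (by norm_num) (by omega)
    omega
  -- size (x*y) = m1 + m2 + 1
  have hxy0 : 0 < x * y := Nat.mul_pos hx0 hy0
  have hszxy : (x * y).size = m1 + m2 + 1 := by
    have hl : m1 + m2 + 1 ≤ (x * y).size := by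
      apply sz_ge'
      calc (2:ℕ) ^ (m1 + m2) = 2 ^ m1 * 2 ^ m2 := by rw [pow_add]
      _ ≤ x * y := Nat.mul_le_mul hxlow hylow
    have hu : (x * y).size ≤ m1 + m2 + 1 := by
      apply Nat.size_le.mpr
      have : (2:ℕ) ^ (m1 + m2 + 1) = 2 ^ (m1 + m2) + 2 ^ (m1 + m2) := by ring
      omega
    omega
  -- rr (x*y) = S and its size
  have hrrxy : x * y - 2 ^ ((x * y).size - 1) = S := by
    rw [hszxy]
    simp only [Nat.add_sub_cancel]
    omega
  have hSsz : r1.size + m2 ≤ S.size := by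
    have h1 : r1 * 2 ^ m2 ≤ S := by
      have : r1 * 2 ^ m2 ≤ r1 * y := Nat.mul_le_mul_left _ hylow
      omega
    have h2 : (r1 * 2 ^ m2).size = r1.size + m2 := by
      rw [← Nat.shiftLeft_eq]
      exact Nat.size_shiftLeft (by omega) m2
    calc r1.size + m2 = (r1 * 2 ^ m2).size := h2.symm
    _ ≤ S.size := Nat.size_le_size h1
  -- contradiction with T(x*y)
  obtain ⟨-, -, hnd⟩ := hy1
  apply hnd
  rw [hrrxy, hszxy]
  have hr1sz2 : r1.size ≤ m1 := Nat.size_le.mpr hr1up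
  have hxsz2 : x.size = m1 + 1 := by omega
  have hLxy : m1 + m2 + 1 - S.size ≤ Lx + 2 := by
    rw [hLx, hxsz2]
    omega
  calc (2:ℕ) ^ (m1 + m2 + 1 - S.size) ∣ 2 ^ (Lx + 2) := pow_dvd_pow 2 hLxy
  _ ∣ y := hy3
  _ ∣ x * y := dvd_mul_left y x

/-- In the `1⋯1` regime, the leading run of ones is generically long. -/
lemma evTopRun (hnp : ∀ n : ℕ, z ≠ pure n)
    (hS : ∀ K, 1 ≤ K → ∀ᶠ n in ↑z, n / 2 ^ (n.size - K) = 2 ^ K - 1) (C : ℕ) :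
    ∀ᶠ n in ↑z, C ≤ n.size - (2 ^ n.size - n).size ∧ 0 < n := by
  filter_upwards [hS (C + 1) (by omega), evLarge'' hnp (2 ^ (C + 1))] with n h1 h3
  have hn0 : 0 < n := lt_of_lt_of_le (Nat.pow_pos (by norm_num)) h3
  have hsz : C + 2 ≤ n.size := by have := sz_ge' h3; omega
  have hd : (0:ℕ) < 2 ^ (n.size - (C + 1)) := Nat.pow_pos (by norm_num)
  obtain ⟨hlow, -⟩ := div_bounds' hd h1
  have hlow2 : 2 ^ n.size - 2 ^ (n.size - (C + 1)) ≤ n := by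
    have he : (2 ^ (C + 1) - 1) * 2 ^ (n.size - (C + 1))
        = 2 ^ n.size - 2 ^ (n.size - (C + 1)) := by
      rw [Nat.sub_mul, Nat.one_mul, ← pow_add]
      congr 2
      omega
    rw [he] at hlow
    exact hlow
  have hesz : (2 ^ n.size - n).size ≤ n.size - (C + 1) + 1 := by
    apply Nat.size_le.mpr
    have h4 : 2 ^ n.size - n ≤ 2 ^ (n.size - (C + 1)) := by
      have := sz_ub' n
      omega
    have h5 : (2:ℕ) ^ (n.size - (C + 1)) < 2 ^ (n.size - (C + 1) + 1) :=
      Nat.pow_lt_pow_right (by norm_num) (by omega)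
    omega
  omega

/-- In the `1⋯1` regime, the valuation-vs-top-run set is generic. -/
lemma evTminus (hnp : ∀ n : ℕ, z ≠ pure n) (hadd : z + z = z)
    (hS : ∀ K, 1 ≤ K → ∀ᶠ n in ↑z, n / 2 ^ (n.size - K) = 2 ^ K - 1) :
    ∀ᶠ n in ↑z, 0 < n ∧ ¬ 2 ^ (n.size - (2 ^ n.size - n).size) ∣ n := by
  rw [evAdd' hadd]
  filter_upwards [evLarge'' hnp 1] with a ha
  set k := padicValNat 2 a with hk
  have hk1 : 2 ^ k ∣ a := pow_padicValNat_dvd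
  have hk2 : ¬ 2 ^ (k + 1) ∣ a := pow_succ_padicValNat_not_dvd (by omega)
  have hka : k < a.size := by
    have h1 : 2 ^ k ≤ a := Nat.le_of_dvd (by omega) hk1
    have := sz_ge' h1
    omega
  set sa := a.size with hsa
  filter_upwards [evTopRun hnp hS (k + 1), evDvd' hnp hadd (sa + 1),
    evLarge'' hnp (2 ^ (sa + 2))] with b hb1 hb2 hb3
  obtain ⟨hRb, hb0⟩ := hb1
  set sb := b.size with hsb
  have hsab : sa + 3 ≤ sb := by have := sz_ge' hb3; omega
  have hbub : b + 2 ^ (sa + 1) ≤ 2 ^ sb :=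
    dvd_up hb2 (pow_dvd_pow 2 (by omega)) (sz_ub' b)
  have hblow : 2 ^ (sb - 1) ≤ b := sz_lb' hb0
  have haub : a < 2 ^ sa := sz_ub' a
  have hszab : (a + b).size = sb := by
    have hu : (a + b).size ≤ sb := Nat.size_le.mpr (by omega)
    have hl : sb ≤ (a + b).size := by
      have : 2 ^ (sb - 1) ≤ a + b := by omega
      have := sz_ge' this
      omega
    omega
  set eb := 2 ^ sb - b with hebdef
  have heb_dvd : 2 ^ (sa + 1) ∣ eb := Nat.dvd_sub (pow_dvd_pow 2 (by omega)) hb2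
  have heb_pos : 0 < eb := by have := sz_ub' b; omega
  have heb_ge : 2 ^ (sa + 1) ≤ eb := Nat.le_of_dvd heb_pos heb_dvd
  -- e(a+b) = eb - a
  have heab : 2 ^ ((a + b).size) - (a + b) = eb - a := by
    rw [hszab]
    omega
  have hesz : (eb - a).size ≤ eb.size := Nat.size_le_size (by omega)
  refine ⟨by omega, ?_⟩
  rw [heab, hszab]
  intro hdvd
  have hRR : k + 1 ≤ sb - (eb - a).size := by
    have h5 : k + 1 ≤ sb - eb.size := hRb
    omega
  have hd1 : 2 ^ (k + 1) ∣ a + b := dvd_trans (pow_dvd_pow 2 hRR) hdvd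
  have hd2 : 2 ^ (k + 1) ∣ b := dvd_trans (pow_dvd_pow 2 (by omega : k + 1 ≤ sa + 1)) hb2
  have hd3 : 2 ^ (k + 1) ∣ a := by
    have := Nat.dvd_sub hd1 hd2
    simpa using this
  exact hk2 hd3

/-- The `1⋯1` regime is impossible. -/
lemma kill_Sminus (hnp : ∀ n : ℕ, z ≠ pure n) (hadd : z + z = z) (hmul : z * z = z)
    (hS : ∀ K, 1 ≤ K → ∀ᶠ n in ↑z, n / 2 ^ (n.size - K) = 2 ^ K - 1) : False := by
  have hT := (evMul' hmul _).mp (evTminus hnp hadd hS)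
  obtain ⟨x, hx1, hx2, hx3⟩ :=
    ((evTopRun hnp hS 3).and ((evLarge'' hnp (2 ^ 4)).and hT)).exists
  obtain ⟨hRx, hx0⟩ := hx1
  have hsx4 : 5 ≤ x.size := by have := sz_ge' hx2; omega
  have hxub : x < 2 ^ x.size := sz_ub' x
  have he1sz : (2 ^ x.size - x).size + 3 ≤ x.size := by omega
  have he1ub : 2 ^ x.size - x < 2 ^ (x.size - 3) := by
    calc 2 ^ x.size - x < 2 ^ (2 ^ x.size - x).size := sz_ub' _
    _ ≤ 2 ^ (x.size - 3) := Nat.pow_le_pow_right (by norm_num) (by omega)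
  obtain ⟨y, hy1, hy2, hy3, hy4⟩ :=
    (hx3.and ((hS 4 (by omega)).and ((evDvd' hnp hadd (x.size - (2 ^ x.size - x).size + 3)).and
      (evLarge'' hnp (2 ^ 8))))).exists
  have hy0 : 0 < y := lt_of_lt_of_le (by norm_num) hy4
  have hsy8 : 9 ≤ y.size := by have := sz_ge' hy4; omega
  have hyub : y < 2 ^ y.size := sz_ub' y
  have he2ub : 2 ^ y.size - y ≤ 2 ^ (y.size - 4) := by
    have hd : (0:ℕ) < 2 ^ (y.size - 4) := Nat.pow_pos (by norm_num)
    obtain ⟨hlow, -⟩ := div_bounds' hd hy2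
    have he : (2 ^ 4 - 1) * 2 ^ (y.size - 4) = 2 ^ y.size - 2 ^ (y.size - 4) := by
      rw [Nat.sub_mul, Nat.one_mul, ← pow_add]
      congr 2
      omega
    rw [he] at hlow
    omega
  have hxy0 : 0 < x * y := Nat.mul_pos hx0 hy0
  have hxeq : x + (2 ^ x.size - x) = 2 ^ x.size := by omega
  have hyeq : y + (2 ^ y.size - y) = 2 ^ y.size := by omega
  have hprod : x * y + (x * (2 ^ y.size - y) + (2 ^ x.size - x) * y
      + (2 ^ x.size - x) * (2 ^ y.size - y)) = 2 ^ (x.size + y.size) := by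
    calc x * y + (x * (2 ^ y.size - y) + (2 ^ x.size - x) * y
        + (2 ^ x.size - x) * (2 ^ y.size - y))
        = (x + (2 ^ x.size - x)) * (y + (2 ^ y.size - y)) := by ring
    _ = 2 ^ x.size * 2 ^ y.size := by rw [hxeq, hyeq]
    _ = 2 ^ (x.size + y.size) := by rw [pow_add]
  have hxlow : 7 * 2 ^ (x.size - 3) ≤ x := by
    have h1 : (2:ℕ) ^ x.size = 8 * 2 ^ (x.size - 3) := by
      have he : x.size - 3 + 3 = x.size := by omega
      calc (2:ℕ) ^ x.size = 2 ^ (x.size - 3 + 3) := by rw [he]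
      _ = 8 * 2 ^ (x.size - 3) := by rw [pow_add]; ring
    omega
  have hylow : 15 * 2 ^ (y.size - 4) ≤ y := by
    have h1 : (2:ℕ) ^ y.size = 16 * 2 ^ (y.size - 4) := by
      have he : y.size - 4 + 4 = y.size := by omega
      calc (2:ℕ) ^ y.size = 2 ^ (y.size - 4 + 4) := by rw [he]
      _ = 16 * 2 ^ (y.size - 4) := by rw [pow_add]; ring
    omega
  have hszxy : (x * y).size = x.size + y.size := by
    have hl : 2 ^ (x.size + y.size - 1) ≤ x * y := by
      have h1 : (2:ℕ) ^ (x.size + y.size - 1) ≤ 64 * (2 ^ (x.size - 3) * 2 ^ (y.size - 4)) := by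
        have he : (2:ℕ) ^ (x.size - 3) * 2 ^ (y.size - 4) = 2 ^ (x.size + y.size - 7) := by
          rw [← pow_add]
          congr 1
          omega
        have he2 : (64:ℕ) * 2 ^ (x.size + y.size - 7) = 2 ^ (x.size + y.size - 1) := by
          have h3 : (64:ℕ) = 2 ^ 6 := by norm_num
          rw [h3, ← pow_add]
          congr 1
          omega
        omega
      have h2 : 64 * (2 ^ (x.size - 3) * 2 ^ (y.size - 4)) ≤ x * y := by
        calc (64:ℕ) * (2 ^ (x.size - 3) * 2 ^ (y.size - 4))
            ≤ 105 * (2 ^ (x.size - 3) * 2 ^ (y.size - 4)) := by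
              apply Nat.mul_le_mul_right
              norm_num
        _ = (7 * 2 ^ (x.size - 3)) * (15 * 2 ^ (y.size - 4)) := by ring
        _ ≤ x * y := Nat.mul_le_mul hxlow hylow
      omega
    have hl2 : x.size + y.size ≤ (x * y).size := by
      have := sz_ge' hl
      omega
    have hu : (x * y).size ≤ x.size + y.size := by
      apply Nat.size_le.mpr
      calc x * y < 2 ^ x.size * 2 ^ y.size := Nat.mul_lt_mul_of_lt_of_lt hxub hyub
      _ = 2 ^ (x.size + y.size) := by rw [pow_add]
    omega
  have heprod : 2 ^ ((x * y).size) - x * y = x * (2 ^ y.size - y) + (2 ^ x.size - x) * y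
      + (2 ^ x.size - x) * (2 ^ y.size - y) := by
    rw [hszxy]
    omega
  have hesz : (2 ^ x.size - x).size + (y.size - 1)
      ≤ (x * (2 ^ y.size - y) + (2 ^ x.size - x) * y + (2 ^ x.size - x) * (2 ^ y.size - y)).size := by
    have h1 : (2 ^ x.size - x) * 2 ^ (y.size - 1)
        ≤ x * (2 ^ y.size - y) + (2 ^ x.size - x) * y + (2 ^ x.size - x) * (2 ^ y.size - y) := by
      have h2 : (2 ^ x.size - x) * 2 ^ (y.size - 1) ≤ (2 ^ x.size - x) * y :=
        Nat.mul_le_mul_left _ (sz_lb' hy0)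
      omega
    have h2 : ((2 ^ x.size - x) * 2 ^ (y.size - 1)).size = (2 ^ x.size - x).size + (y.size - 1) := by
      rw [← Nat.shiftLeft_eq]
      exact Nat.size_shiftLeft (by omega) _
    calc (2 ^ x.size - x).size + (y.size - 1) = ((2 ^ x.size - x) * 2 ^ (y.size - 1)).size := h2.symm
    _ ≤ _ := Nat.size_le_size h1
  obtain ⟨-, hnd⟩ := hy1
  apply hnd
  rw [heprod, hszxy]
  have hRxy : x.size + y.size
      - (x * (2 ^ y.size - y) + (2 ^ x.size - x) * y + (2 ^ x.size - x) * (2 ^ y.size - y)).size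
      ≤ x.size - (2 ^ x.size - x).size + 3 := by
    omega
  calc (2:ℕ) ^ (x.size + y.size
      - (x * (2 ^ y.size - y) + (2 ^ x.size - x) * y + (2 ^ x.size - x) * (2 ^ y.size - y)).size)
      ∣ 2 ^ (x.size - (2 ^ x.size - x).size + 3) := pow_dvd_pow 2 hRxy
  _ ∣ y := hy3
  _ ∣ x * y := dvd_mul_left y x

end UF


section Core
variable {z : Ultrafilter ℕ}

/-- No nonprincipal ultrafilter on ℕ is idempotent for both addition and
multiplication. -/
lemma no_double_idem (z : Ultrafilter ℕ) (hnp : ∀ n : ℕ, z ≠ pure n)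
    (hadd : z + z = z) (hmul : z * z = z) : False := by
  have hex : ∀ K : ℕ, ∃ r, 2 ^ (K + 1 - 1) ≤ r ∧ r < 2 ^ (K + 1) ∧
      ∀ᶠ n in ↑z, n / 2 ^ (n.size - (K + 1)) = r :=
    fun K => evWindow hnp (K + 1) (by omega)
  choose A' hA1 hA2 hA3 using hex
  set A : ℕ → ℕ := fun K => A' (K - 1) with hA
  have hwin : ∀ K, 1 ≤ K → ∀ᶠ n in ↑z, n / 2 ^ (n.size - K) = A K := by
    intro K hK
    obtain ⟨K', rfl⟩ : ∃ K', K = K' + 1 := ⟨K - 1, by omega⟩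
    simpa [hA] using hA3 K'
  have R1 : ∀ K, 1 ≤ K → 2 ^ (K - 1) ≤ A K ∧ A K < 2 ^ K := by
    intro K hK
    obtain ⟨K', rfl⟩ : ∃ K', K = K' + 1 := ⟨K - 1, by omega⟩
    constructor
    · simpa [hA] using hA1 K'
    · simpa [hA] using hA2 K'
  have R2 : ∀ K, 1 ≤ K → A (K + 1) = 2 * A K ∨ A (K + 1) = 2 * A K + 1 := by
    intro K hK
    exact evWindowSucc hnp hK (hwin K hK) (hwin (K + 1) (by omega))
  have R3 : ∀ K, 3 ≤ K → ∃ κ, K + 1 ≤ κ ∧ κ ≤ K + 3 ∧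
      A K * 2 ^ κ < (A (K + 1) + 1) * (A (K + 1) + 1) ∧
      A (K + 1) * A (K + 1) < (A K + 1) * 2 ^ κ := by
    intro K hK
    have hb := R1 (K + 1) (by omega)
    have hb1 : 2 ^ K ≤ A (K + 1) := by
      have := hb.1
      simpa using this
    exact evWindowMul hnp hmul hK (hwin K (by omega)) (hwin (K + 1) (by omega)) hb1 hb.2
  rcases window_dichotomy A R1 R2 R3 with hS | hS
  · exact kill_Splus hnp hadd hmul (fun K hK => by
      have h1 := hwin K hK
      rw [hS K hK] at h1
      exact h1)
  · exact kill_Sminus hnp hadd hmul (fun K hK => by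
      have h1 := hwin K hK
      rw [hS K hK] at h1
      exact h1)

end Core

/-- No closed subalgebra of `(ℕ*, +, ·)` satisfies the left distributivity law. -/
theorem stmt_12 :
    ¬ ∃ A : Set (Ultrafilter ℕ), A.Nonempty ∧
      (∀ u ∈ A, ∀ n : ℕ, u ≠ pure n) ∧
      IsClosed A ∧
      (∀ u ∈ A, ∀ v ∈ A, u + v ∈ A) ∧
      (∀ u ∈ A, ∀ v ∈ A, u * v ∈ A) ∧
      (∀ u ∈ A, ∀ v ∈ A, ∀ w ∈ A, u * (v + w) = u * v + u * w) := by
  rintro ⟨A, hne, hnp, hcl, hadd, hmul, hdist⟩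
  obtain ⟨p, hpA, hpp⟩ :=
    exists_idempotent_in_compact_add_subsemigroup
      (fun r => Ultrafilter.continuous_add_left r) A hne hcl.isCompact hadd
  set B : Set (Ultrafilter ℕ) := (fun x => x * p) '' A with hB
  have hBne : B.Nonempty := hne.image _
  have hBcomp : IsCompact B := hcl.isCompact.image (Ultrafilter.continuous_mul_left p)
  have hBsubA : B ⊆ A := by rintro _ ⟨x, hx, rfl⟩; exact hmul x hx p hpA
  have hBmul : ∀ x ∈ B, ∀ y ∈ B, x * y ∈ B := by
    rintro _ ⟨x, hx, rfl⟩ _ ⟨y, hy, rfl⟩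
    refine ⟨x * (p * y), hmul x hx _ (hmul p hpA y hy), ?_⟩
    simp only [mul_assoc]
  obtain ⟨z, hzB, hzz⟩ :=
    exists_idempotent_in_compact_subsemigroup
      (fun r => Ultrafilter.continuous_mul_left r) B hBne hBcomp hBmul
  have hzadd : z + z = z := by
    obtain ⟨x, hx, hxz⟩ := hzB
    simp only [] at hxz
    calc z + z = x * p + x * p := by rw [hxz]
    _ = x * (p + p) := (hdist x hx p hpA p hpA).symm
    _ = z := by rw [hpp, hxz]
  exact no_double_idem z (hnp z (hBsubA hzB)) hzadd hzz
end

section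
/- Every nonempty compact Hausdorff left topological groupoid satisfying the identities (x·y)·(y·z) = ((x·y)·y)·z and (x·y)·(x·z) = x·(y·(x·z)) has an idempotent, i.e., an element a with a·a = a. -/
/-- Every nonempty compact Hausdorff left topological groupoid satisfying
`(x·y)·(y·z) = ((x·y)·y)·z` and `(x·y)·(x·z) = x·(y·(x·z))` has an idempotent. -/
theorem stmt_15 {X : Type*} [TopologicalSpace X] [CompactSpace X] [T2Space X] [Nonempty X]
    (m : X → X → X)
    (hmc : ∀ a : X, Continuous fun x => m a x)
    (h1 : ∀ x y z : X, m (m x y) (m y z) = m (m (m x y) y) z)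
    (h2 : ∀ x y z : X, m (m x y) (m x z) = m x (m y (m x z))) :
    ∃ a : X, m a a = a := by
  classical
  set S : Set (Set X) := {A | A.Nonempty ∧ IsClosed A ∧ ∀ x ∈ A, ∀ y ∈ A, m x y ∈ A} with hS
  have hXS : (Set.univ : Set X) ∈ S :=
    ⟨Set.univ_nonempty, isClosed_univ, fun _ _ _ _ => Set.mem_univ _⟩
  obtain ⟨A, -, hAS, hmin⟩ := zorn_superset_nonempty S (fun c hcS hchain hcne => by
    refine ⟨⋂₀ c, ⟨?_, ?_, ?_⟩, fun s hs => Set.sInter_subset_of_mem hs⟩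
    · haveI : Nonempty c := hcne.to_subtype
      exact IsCompact.nonempty_sInter_of_directed_nonempty_isCompact_isClosed
        (IsChain.directedOn hchain.symm)
        (fun U hU => (hcS hU).1)
        (fun U hU => (hcS hU).2.1.isCompact)
        (fun U hU => (hcS hU).2.1)
    · exact isClosed_sInter fun U hU => (hcS hU).2.1
    · intro x hx y hy
      rw [Set.mem_sInter] at *
      exact fun U hU => (hcS hU).2.2 x (hx U hU) y (hy U hU)) Set.univ hXS
  obtain ⟨hAne, hAcl, hAmul⟩ := hAS
  obtain ⟨a, ha⟩ := hAne
  -- B = a • A equals A by minimality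
  have hBsub : (fun x => m a x) '' A ⊆ A := by
    rintro _ ⟨y, hy, rfl⟩
    exact hAmul a ha y hy
  have hBS : (fun x => m a x) '' A ∈ S := by
    refine ⟨Set.Nonempty.image _ ⟨a, ha⟩, (hAcl.isCompact.image (hmc a)).isClosed, ?_⟩
    rintro _ ⟨y, hy, rfl⟩ _ ⟨z, hz, rfl⟩
    exact ⟨m y (m a z), hAmul y hy _ (hAmul a ha z hz), (h2 a y z).symm⟩
  have hBA : (fun x => m a x) '' A = A :=
    Set.Subset.antisymm hBsub (hmin hBS hBsub)
  have hbex : ∃ b ∈ A, m a b = a := by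
    have : a ∈ (fun x => m a x) '' A := hBA.symm ▸ ha
    obtain ⟨b, hb, hba⟩ := this
    exact ⟨b, hb, hba⟩
  -- key: if m a b = a then m a (m b z) = m a z for all z
  have key : ∀ b, m a b = a → ∀ z, m a (m b z) = m a z := by
    intro b hb z
    have := h1 a b z
    rw [hb] at this
    rw [this, hb]
  -- C = {x ∈ A | m a x = a} equals A by minimality
  have hCsub : {x ∈ A | m a x = a} ⊆ A := fun x hx => hx.1
  have hCS : {x ∈ A | m a x = a} ∈ S := by
    obtain ⟨b, hb, hba⟩ := hbex
    refine ⟨⟨b, hb, hba⟩, ?_, ?_⟩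
    · exact hAcl.inter ((isClosed_singleton.preimage (hmc a)))
    · rintro x ⟨hxA, hxa⟩ y ⟨hyA, hya⟩
      exact ⟨hAmul x hxA y hyA, by rw [key x hxa y, hya]⟩
  have hCA : {x ∈ A | m a x = a} = A :=
    Set.Subset.antisymm hCsub (hmin hCS hCsub)
  have : a ∈ {x ∈ A | m a x = a} := hCA.symm ▸ ha
  exact ⟨a, this.2⟩
end

section
/- Every nonempty compact Hausdorff left topological groupoid satisfying the identities (x·z)·(y·z) = ((x·z)·y)·z and (x·y)·(x·z) = x·(y·(x·z)) has an idempotent, i.e., an element a with a·a = a. -/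
/-- Every nonempty compact Hausdorff left topological groupoid satisfying
`(x·z)·(y·z) = ((x·z)·y)·z` and `(x·y)·(x·z) = x·(y·(x·z))` has an idempotent. -/
theorem stmt_16 {X : Type*} [TopologicalSpace X] [CompactSpace X] [T2Space X] [Nonempty X]
    (m : X → X → X)
    (hmc : ∀ a : X, Continuous fun x => m a x)
    (h1 : ∀ x y z : X, m (m x z) (m y z) = m (m (m x z) y) z)
    (h2 : ∀ x y z : X, m (m x y) (m x z) = m x (m y (m x z))) :
    ∃ a : X, m a a = a := by
  let S : Set (Set X) :=
    { N | IsClosed N ∧ N.Nonempty ∧ ∀ x ∈ N, ∀ y ∈ N, m x y ∈ N }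
  rsuffices ⟨N, hN⟩ : ∃ N', Minimal (· ∈ S) N'
  · obtain ⟨N_closed, ⟨a, ha⟩, N_mul⟩ := hN.prop
    use a
    -- a·N = N
    have scaling_eq_self : (m a) '' N = N := by
      apply hN.eq_of_subset
      · refine ⟨((N_closed.isCompact).image (hmc a)).isClosed, ⟨_, ⟨a, ha, rfl⟩⟩, ?_⟩
        rintro _ ⟨x, hx, rfl⟩ _ ⟨y, hy, rfl⟩
        exact ⟨m x (m a y), N_mul _ hx _ (N_mul _ ha _ hy), (h2 a x y).symm⟩
      · rintro _ ⟨x, hx, rfl⟩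
        exact N_mul _ ha _ hx
    have absorbing_eq_self : N ∩ { x | m a x = a } = N := by
      apply hN.eq_of_subset
      · refine ⟨N_closed.inter ((T1Space.t1 a).preimage (hmc a)), ?_, ?_⟩
        · rwa [← scaling_eq_self] at ha
        · rintro x ⟨memx, eqx : _ = a⟩ y ⟨memy, eqy : _ = a⟩
          refine ⟨N_mul _ memx _ memy, ?_⟩
          -- write y = m a z
          obtain ⟨z, hz, rfl⟩ : ∃ z ∈ N, m a z = y := by
            have := scaling_eq_self ▸ memy
            obtain ⟨z, hz, hzy⟩ := this
            exact ⟨z, hz, hzy⟩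
          show m a (m x (m a z)) = a
          rw [← h2, eqx, eqy]
      · apply Set.inter_subset_left
    rw [← absorbing_eq_self] at ha
    exact ha.2
  refine zorn_superset _ fun c hcs hc => ?_
  refine
    ⟨⋂₀ c, ⟨isClosed_sInter fun t ht => (hcs ht).1, ?_, fun x hx y hy => ?_⟩, fun s hs =>
      Set.sInter_subset_of_mem hs⟩
  · obtain rfl | hcnemp := c.eq_empty_or_nonempty
    · rw [Set.sInter_empty]
      apply Set.univ_nonempty
    convert
      @IsCompact.nonempty_iInter_of_directed_nonempty_isCompact_isClosed _ _ _ hcnemp.coe_sort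
        ((↑) : c → Set X) ?_ ?_ ?_ ?_
    · exact Set.sInter_eq_iInter
    · refine DirectedOn.directed_val (IsChain.directedOn hc.symm)
    exacts [fun i => (hcs i.prop).2.1, fun i => (hcs i.prop).1.isCompact, fun i => (hcs i.prop).1]
  · rw [Set.mem_sInter]
    exact fun t ht => (hcs ht).2.2 x (Set.mem_sInter.mp hx t ht) y (Set.mem_sInter.mp hy t ht)
end

section
/- Every nonempty compact Hausdorff left topological groupoid satisfying the identities (x·x)·(y·z) = ((x·x)·y)·z and (x·y)·(x·z) = x·(y·(x·z)) has an idempotent, i.e., an element a with a·a = a. -/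
/-- Every nonempty compact Hausdorff left topological groupoid satisfying
`(x·x)·(y·z) = ((x·x)·y)·z` and `(x·y)·(x·z) = x·(y·(x·z))` has an idempotent. -/
theorem stmt_17 {X : Type*} [TopologicalSpace X] [CompactSpace X] [T2Space X] [Nonempty X]
    (m : X → X → X)
    (hmc : ∀ a : X, Continuous fun x => m a x)
    (h1 : ∀ x y z : X, m (m x x) (m y z) = m (m (m x x) y) z)
    (h2 : ∀ x y z : X, m (m x y) (m x z) = m x (m y (m x z))) :
    ∃ a : X, m a a = a := by
  classical
  set 𝒮 : Set (Set X) := {S | S.Nonempty ∧ IsClosed S ∧ ∀ x ∈ S, ∀ y ∈ S, m x y ∈ S} with h𝒮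
  have huniv : (Set.univ : Set X) ∈ 𝒮 :=
    ⟨Set.univ_nonempty, isClosed_univ, fun _ _ _ _ => trivial⟩
  obtain ⟨S, -, hS, hmin⟩ := zorn_superset_nonempty 𝒮 (fun c hc hchain hcne => by
    refine ⟨⋂₀ c, ⟨?_, ?_, ?_⟩, fun s hs => Set.sInter_subset_of_mem hs⟩
    · haveI : Nonempty c := hcne.to_subtype
      exact IsCompact.nonempty_sInter_of_directed_nonempty_isCompact_isClosed
        (IsChain.directedOn hchain.symm)
        (fun U hU => (hc hU).1)
        (fun U hU => (hc hU).2.1.isCompact)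
        (fun U hU => (hc hU).2.1)
    · exact isClosed_sInter fun U hU => (hc hU).2.1
    · intro x hx y hy
      exact fun U hU => (hc hU).2.2 x (hx U hU) y (hy U hU)) Set.univ huniv
  obtain ⟨hSne, hScl, hSm⟩ := hS
  obtain ⟨b, hb⟩ := hSne
  set a : X := m b b with ha
  have haS : a ∈ S := hSm b hb b hb
  have hassoc : ∀ y z : X, m a (m y z) = m (m a y) z := fun y z => h1 b y z
  -- aS is a closed nonempty subsemigroup contained in S
  have haSsub : (m a) '' S ⊆ S := fun x ⟨y, hy, hxy⟩ => hxy ▸ hSm a haS y hy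
  have haSmem : (m a) '' S ∈ 𝒮 := by
    refine ⟨⟨m a b, b, hb, rfl⟩, ((hScl.isCompact.image (hmc a)).isClosed), ?_⟩
    rintro x ⟨y, hy, rfl⟩ z ⟨w, hw, rfl⟩
    refine ⟨m y (m a w), hSm y hy _ (hSm a haS w hw), (h2 a y w).symm⟩
  have haself : a ∈ (m a) '' S := hmin haSmem haSsub haS
  -- T = {z ∈ S | m a z = a}
  set T : Set X := {z ∈ S | m a z = a} with hT
  have hTmem : T ∈ 𝒮 := by
    refine ⟨?_, ?_, ?_⟩
    · obtain ⟨y, hy, hya⟩ := haself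
      exact ⟨y, hy, hya⟩
    · exact hScl.inter (IsClosed.preimage (hmc a) isClosed_singleton)
    · rintro y ⟨hyS, hy⟩ z ⟨hzS, hz⟩
      refine ⟨hSm y hyS z hzS, ?_⟩
      rw [hassoc y z, hy, hz]
  have : a ∈ T := hmin hTmem (fun x hx => hx.1) haS
  exact ⟨a, this.2⟩
end

section
/- Every nonempty compact Hausdorff left topological groupoid satisfying the identity x·(y·z) = (x·z)·y has an idempotent, i.e., an element a with a·a = a. -/
/-- Every nonempty compact Hausdorff left topological groupoid satisfying
`x·(y·z) = (x·z)·y` has an idempotent. -/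
theorem stmt_18 {X : Type*} [TopologicalSpace X] [CompactSpace X] [T2Space X] [Nonempty X]
    (m : X → X → X)
    (hmc : ∀ a : X, Continuous fun x => m a x)
    (h : ∀ x y z : X, m x (m y z) = m (m x z) y) :
    ∃ a : X, m a a = a := by
  let S : Set (Set X) :=
    { N | IsClosed N ∧ N.Nonempty ∧ ∀ x ∈ N, ∀ y ∈ N, m x y ∈ N }
  rsuffices ⟨N, hN⟩ : ∃ N', Minimal (· ∈ S) N'
  · obtain ⟨N_closed, ⟨a, ha⟩, N_mul⟩ := hN.prop
    use a
    -- key computation: m (m a s) w = m a (m w s)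
    have key : ∀ s w : X, m (m a s) w = m a (m w s) := fun s w => (h a w s).symm
    have scaling_eq_self : m a '' N = N := by
      apply hN.eq_of_subset
      · refine ⟨((N_closed.isCompact.image (hmc a)).isClosed), ⟨_, ⟨a, ha, rfl⟩⟩, ?_⟩
        rintro _ ⟨s, hs, rfl⟩ _ ⟨t, ht, rfl⟩
        refine ⟨m a (m s t), N_mul _ ha _ (N_mul _ hs _ ht), ?_⟩
        rw [key s (m a t), key t s]
      · rintro _ ⟨s, hs, rfl⟩
        exact N_mul _ ha _ hs
    have absorbing_eq_self : N ∩ { x | m a x = a } = N := by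
      apply hN.eq_of_subset
      · refine ⟨N_closed.inter ((T1Space.t1 a).preimage (hmc a)), ?_, ?_⟩
        · rw [← scaling_eq_self] at ha
          obtain ⟨s, hs, hsa⟩ := ha
          exact ⟨s, hs, hsa⟩
        · rintro x ⟨memx, eqx : _ = a⟩ y ⟨memy, eqy : _ = a⟩
          refine ⟨N_mul _ memx _ memy, ?_⟩
          show m a (m x y) = a
          rw [h a x y, eqy, eqx]
      · exact Set.inter_subset_left
    rw [← absorbing_eq_self] at ha
    exact ha.2
  refine zorn_superset _ fun c hcs hc => ?_
  refine
    ⟨⋂₀ c, ⟨isClosed_sInter fun t ht => (hcs ht).1, ?_, fun x hx y hy => ?_⟩, fun s hs =>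
      Set.sInter_subset_of_mem hs⟩
  · obtain rfl | hcnemp := c.eq_empty_or_nonempty
    · rw [Set.sInter_empty]; exact Set.univ_nonempty
    convert
      @IsCompact.nonempty_iInter_of_directed_nonempty_isCompact_isClosed _ _ _ hcnemp.coe_sort
        ((↑) : c → Set X) ?_ ?_ ?_ ?_
    · exact Set.sInter_eq_iInter
    · exact DirectedOn.directed_val (IsChain.directedOn hc.symm)
    exacts [fun i => (hcs i.prop).2.1, fun i => (hcs i.prop).1.isCompact, fun i => (hcs i.prop).1]
  · rw [Set.mem_sInter]
    exact fun t ht => (hcs ht).2.2 x (Set.mem_sInter.mp hx t ht) y (Set.mem_sInter.mp hy t ht)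
end

section
/- Every nonempty compact Hausdorff left topological groupoid satisfying the left self-distributivity law x·(y·z) = (x·y)·(x·z) together with the identity x·(x·x) = (x·x)·x has an idempotent, i.e., an element a with a·a = a. -/
/-- Every nonempty compact Hausdorff left topological groupoid satisfying left
self-distributivity `x·(y·z) = (x·y)·(x·z)` and `x·(x·x) = (x·x)·x` has an idempotent. -/
theorem stmt_19 {X : Type*} [TopologicalSpace X] [CompactSpace X] [T2Space X] [Nonempty X]
    (m : X → X → X)
    (hmc : ∀ a : X, Continuous fun x => m a x)
    (h1 : ∀ x y z : X, m x (m y z) = m (m x y) (m x z))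
    (h2 : ∀ x : X, m x (m x x) = m (m x x) x) :
    ∃ a : X, m a a = a := by
  obtain ⟨a⟩ := ‹Nonempty X›
  set b := m a a with hb
  set c := m b b with hc
  have hab : m a b = c := by rw [hb, h1, ← hc]
  have hba : m b a = c := by rw [← hab, ← h2]
  refine ⟨c, ?_⟩
  have : m b (m a a) = m (m b a) (m b a) := h1 b a a
  rw [hba, ← hb, ← hc] at this
  exact this.symm
end
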